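/- arXiv:1802.09667 — 3 statements merged into one kernel-verified Lean document; each statement's English description precedes it below -/
import Mathlib

section
/- Let Z be a p-dimensional random vector with square-integrable entries, E[Z] = 0 and E[ZZᵀ] = I_p. Let P be a symmetric idempotent (orthogonal projection) p×p real matrix, and let ν, a ∈ ℝ^p with Pν = 0. If E[νᵀZ | σ(PZ)] = aᵀPZ almost surely, then aᵀPa = 0 and aᵀPZ = 0 almost surely. -/
open MeasureTheory Matrix

lemma aux_int_mul {Ω : Type*} [MeasurableSpace Ω] {μ : Measure Ω} {f g : Ω → ℝ}
    (hf : MemLp f 2 μ) (hg : MemLp g 2 μ) : Integrable (fun ω => f ω * g ω) μ := by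
  haveI : ENNReal.HolderTriple 2 2 1 :=
    ENNReal.holderConjugate_iff.mpr ENNReal.inv_two_add_inv_two
  have h := hf.smul (φ := g) hg (r := 1)
  rw [memLp_one_iff_integrable] at h
  exact (by simpa [smul_eq_mul, mul_comm] using h : Integrable (f * g) μ)

/-- Let `Z` be a `p`-dimensional random vector with square-integrable entries,
`E[Z] = 0` and `E[ZZᵀ] = I_p`. Let `P` be a symmetric idempotent `p × p` matrix and let
`ν, a ∈ ℝ^p` with `Pν = 0`. If `E[νᵀZ | σ(PZ)] = aᵀPZ` a.s., then `aᵀPa = 0` and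
`aᵀPZ = 0` a.s. -/
theorem stmt10 {Ω : Type*} [MeasurableSpace Ω] (μ : Measure Ω) [IsProbabilityMeasure μ]
    (p : ℕ) (Z : Ω → Fin p → ℝ) (hZmeas : Measurable Z)
    (hZL2 : ∀ i, MemLp (fun ω => Z ω i) 2 μ)
    (hZmean : ∀ i, ∫ ω, Z ω i ∂μ = 0)
    (hZcov : ∀ i j, ∫ ω, Z ω i * Z ω j ∂μ = (1 : Matrix (Fin p) (Fin p) ℝ) i j)
    (P : Matrix (Fin p) (Fin p) ℝ) (hPsymm : Pᵀ = P) (hPidem : P * P = P)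
    (ν a : Fin p → ℝ) (hPν : P.mulVec ν = 0)
    (hcond : μ[fun ω => ν ⬝ᵥ Z ω |
        MeasurableSpace.comap (fun ω => P.mulVec (Z ω)) inferInstance]
      =ᵐ[μ] fun ω => a ⬝ᵥ P.mulVec (Z ω)) :
    a ⬝ᵥ P.mulVec a = 0 ∧ (fun ω => a ⬝ᵥ P.mulVec (Z ω)) =ᵐ[μ] fun _ => 0 := by
  -- linear combinations of Z are in L2
  have hL2 : ∀ u : Fin p → ℝ, MemLp (fun ω => u ⬝ᵥ Z ω) 2 μ := by
    intro u
    have heq : (fun ω => u ⬝ᵥ Z ω) = fun ω => ∑ i, u i * Z ω i := by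
      ext ω; simp [dotProduct]
    rw [heq]
    have := memLp_finsetSum' (μ := μ) (p := 2) Finset.univ
      (f := fun i ω => u i * Z ω i) (fun i _ => (hZL2 i).const_mul (u i))
    have heq2 : (∑ i : Fin p, fun ω => u i * Z ω i) = fun ω => ∑ i, u i * Z ω i := by
      ext ω; simp
    rwa [heq2] at this
  -- covariance identity
  have hcov : ∀ u v : Fin p → ℝ, ∫ ω, (u ⬝ᵥ Z ω) * (v ⬝ᵥ Z ω) ∂μ = u ⬝ᵥ v := by
    intro u v
    have heq : (fun ω => (u ⬝ᵥ Z ω) * (v ⬝ᵥ Z ω))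
        = fun ω => ∑ i, ∑ j, (u i * v j) * (Z ω i * Z ω j) := by
      ext ω
      simp only [dotProduct, Finset.sum_mul_sum]
      congr 1; ext i; congr 1; ext j; ring
    rw [heq]
    have hint : ∀ i j : Fin p, Integrable (fun ω => (u i * v j) * (Z ω i * Z ω j)) μ :=
      fun i j => (aux_int_mul (hZL2 i) (hZL2 j)).const_mul _
    rw [integral_finset_sum _ (fun i _ => integrable_finset_sum _ (fun j _ => hint i j))]
    have hrow : ∀ i : Fin p, ∫ ω, ∑ j, (u i * v j) * (Z ω i * Z ω j) ∂μ = u i * v i := by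
      intro i
      rw [integral_finset_sum _ (fun j _ => hint i j)]
      have hterm : ∀ j : Fin p, ∫ ω, (u i * v j) * (Z ω i * Z ω j) ∂μ
          = (u i * v j) * (1 : Matrix (Fin p) (Fin p) ℝ) i j := by
        intro j
        rw [integral_const_mul, hZcov i j]
      simp only [hterm, Matrix.one_apply]
      simp [Finset.mul_sum]
    simp only [hrow, dotProduct]
  -- rewrite aᵀPx as (Pa)ᵀx
  have hWc : ∀ x : Fin p → ℝ, a ⬝ᵥ P.mulVec x = (P.mulVec a) ⬝ᵥ x := by
    intro x
    rw [Matrix.dotProduct_mulVec, ← Matrix.mulVec_transpose, hPsymm]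
  -- m ≤ ambient
  have hPZmeas : Measurable (fun ω => P.mulVec (Z ω)) := by
    have h1 : Continuous (fun x : Fin p → ℝ => P.mulVec x) := by
      have := P.mulVecLin.continuous_of_finiteDimensional
      exact continuous_const.matrix_mulVec continuous_id
    exact (h1.measurable).comp hZmeas
  have hm : MeasurableSpace.comap (fun ω => P.mulVec (Z ω)) inferInstance
      ≤ ‹MeasurableSpace Ω› := hPZmeas.comap_le
  -- W is m-measurable
  have hW_meas : Measurable[MeasurableSpace.comap (fun ω => P.mulVec (Z ω)) inferInstance]
      (fun ω => a ⬝ᵥ P.mulVec (Z ω)) := by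
    have h1 : Measurable[MeasurableSpace.comap (fun ω => P.mulVec (Z ω)) inferInstance]
        (fun ω => P.mulVec (Z ω)) := Measurable.of_comap_le le_rfl
    have h2 : Continuous (fun x : Fin p → ℝ => a ⬝ᵥ x) := by
      simp only [dotProduct]
      exact continuous_finset_sum _ (fun i _ => (continuous_const.mul (continuous_apply i)))
    exact (h2.measurable).comp h1
  have hWL2 : MemLp (fun ω => a ⬝ᵥ P.mulVec (Z ω)) 2 μ := by
    have := hL2 (P.mulVec a)
    simpa only [← hWc] using this
  have hνZL2 : MemLp (fun ω => ν ⬝ᵥ Z ω) 2 μ := hL2 ν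
  have hint_prod : Integrable ((fun ω => a ⬝ᵥ P.mulVec (Z ω)) * (fun ω => ν ⬝ᵥ Z ω)) μ := by
    have := aux_int_mul hWL2 hνZL2
    exact this
  have hpull := condExp_mul_of_stronglyMeasurable_left (μ := μ)
    (m := MeasurableSpace.comap (fun ω => P.mulVec (Z ω)) inferInstance)
    hW_meas.stronglyMeasurable hint_prod (hνZL2.integrable (by norm_num))
  have hint1 : ∫ ω, (a ⬝ᵥ P.mulVec (Z ω)) * (ν ⬝ᵥ Z ω) ∂μ
      = ∫ ω, (a ⬝ᵥ P.mulVec (Z ω)) * (a ⬝ᵥ P.mulVec (Z ω)) ∂μ := by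
    calc ∫ ω, (a ⬝ᵥ P.mulVec (Z ω)) * (ν ⬝ᵥ Z ω) ∂μ
        = ∫ ω, (μ[(fun ω => a ⬝ᵥ P.mulVec (Z ω)) * (fun ω => ν ⬝ᵥ Z ω) |
            MeasurableSpace.comap (fun ω => P.mulVec (Z ω)) inferInstance]) ω ∂μ := by
          rw [integral_condExp hm]; rfl
      _ = ∫ ω, (a ⬝ᵥ P.mulVec (Z ω)) * (μ[fun ω => ν ⬝ᵥ Z ω |
            MeasurableSpace.comap (fun ω => P.mulVec (Z ω)) inferInstance]) ω ∂μ :=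
          integral_congr_ae (hpull.mono (fun ω h => h))
      _ = ∫ ω, (a ⬝ᵥ P.mulVec (Z ω)) * (a ⬝ᵥ P.mulVec (Z ω)) ∂μ :=
          integral_congr_ae (hcond.mono (fun ω h =>
            congrArg (fun t => (a ⬝ᵥ P.mulVec (Z ω)) * t) h))
  -- evaluate both sides
  have hlhs : ∫ ω, (a ⬝ᵥ P.mulVec (Z ω)) * (ν ⬝ᵥ Z ω) ∂μ = 0 := by
    have h := hcov (P.mulVec a) ν
    simp only [← hWc] at h
    rw [h, hPν, dotProduct_zero]
  have hrhs : ∫ ω, (a ⬝ᵥ P.mulVec (Z ω)) * (a ⬝ᵥ P.mulVec (Z ω)) ∂μ = a ⬝ᵥ P.mulVec a := by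
    have h := hcov (P.mulVec a) (P.mulVec a)
    simp only [← hWc] at h
    rw [h, Matrix.mulVec_mulVec, hPidem]
  have hzero : a ⬝ᵥ P.mulVec a = 0 := by rw [← hrhs, ← hint1, hlhs]
  refine ⟨hzero, ?_⟩
  have hintW2 : Integrable (fun ω => (a ⬝ᵥ P.mulVec (Z ω)) * (a ⬝ᵥ P.mulVec (Z ω))) μ :=
    aux_int_mul hWL2 hWL2
  have hintzero : ∫ ω, (a ⬝ᵥ P.mulVec (Z ω)) * (a ⬝ᵥ P.mulVec (Z ω)) ∂μ = 0 := by
    rw [hrhs, hzero]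
  have hae := (integral_eq_zero_iff_of_nonneg
    (fun ω => mul_self_nonneg _) hintW2).mp hintzero
  exact hae.mono (fun ω h => by
    have h0 : (a ⬝ᵥ P.mulVec (Z ω)) * (a ⬝ᵥ P.mulVec (Z ω)) = 0 := h
    simpa using mul_self_eq_zero.mp h0)
end

section
/- Assume conditions (A1) and (A2) and let P denote the orthogonal projection onto S_{(T,C)|Z}. Then for every ν ∈ ℝ^p orthogonal to S_{(T,C)|Z}: νᵀ E[(Z−Z̃)(Z−Z̃)ᵀ | T, T̃, C, C̃] ν = 2 νᵀν almost surely, where (Z̃,T̃,C̃) is an independent copy of (Z,T,C); consequently, the column space of 2I_p − E[(Z−Z̃)(Z−Z̃)ᵀ | T, T̃, C, C̃] is almost surely contained in S_{(T,C)|Z}. -/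
open MeasureTheory ProbabilityTheory Matrix

noncomputable section

open scoped ENNReal

/-- The conditioning random vector `(T, T̃, C, C̃)` on the product space, where the second
coordinate carries the independent copy. -/
def obsTC {Ω : Type*} (T C : Ω → ℝ) (ϖ : Ω × Ω) : ℝ × ℝ × ℝ × ℝ :=
  (T ϖ.1, T ϖ.2, C ϖ.1, C ϖ.2)

section AuxiliaryLemmas

lemma measurable_dot' {p : ℕ} (a : Fin p → ℝ) :
    Measurable (fun x : Fin p → ℝ => a ⬝ᵥ x) := by
  simp only [dotProduct]
  exact Finset.measurable_sum _ (fun i _ => measurable_const.mul (measurable_pi_apply i))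


lemma measurable_comap_self' {α β : Type*} [mβ : MeasurableSpace β] (g : α → β) :
    @Measurable α β (MeasurableSpace.comap g mβ) mβ g := fun s hs => ⟨s, hs, rfl⟩

lemma L2mul {α : Type*} [MeasurableSpace α] {μ : Measure α} {f g : α → ℝ}
    (hf : MemLp f 2 μ) (hg : MemLp g 2 μ) :
    Integrable (fun x => f x * g x) μ := by
  have h : (1 : ℝ≥0∞) / 1 = 1/2 + 1/2 := by
    rw [ENNReal.div_add_div_same, one_add_one_eq_two, ENNReal.div_self two_ne_zero ENNReal.ofNat_ne_top, div_one]
  have := (hf.smul hg : MemLp (g • f) 1 μ)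
  rw [memLp_one_iff_integrable] at this
  exact (by simpa [Pi.smul_apply, smul_eq_mul, mul_comm] using this : Integrable (f * g) μ)

lemma memLp2_dot {α : Type*} [MeasurableSpace α] {μ : Measure α} {p : ℕ}
    {Z : α → Fin p → ℝ} (hZ : ∀ i, MemLp (fun ω => Z ω i) 2 μ) (v : Fin p → ℝ) :
    MemLp (fun ω => v ⬝ᵥ Z ω) 2 μ := by
  have : (fun ω => v ⬝ᵥ Z ω) = ∑ i : Fin p, (fun ω => v i * Z ω i) := by
    funext ω; simp [dotProduct, Finset.sum_apply]
  rw [this]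
  exact memLp_finset_sum' _ (fun i _ => (hZ i).const_mul (v i))

lemma stepB {Ω : Type*} {m' : MeasurableSpace Ω} [mΩ : MeasurableSpace Ω]
    [StandardBorelSpace Ω]
    (μ : Measure Ω) [IsProbabilityMeasure μ]
    {p : ℕ} {Z : Ω → Fin p → ℝ} (hZ : Measurable Z)
    {Y : Ω → ℝ × ℝ} (hY : Measurable Y)
    (hm' : m' ≤ mΩ)
    (hci : CondIndepFun m' hm' Y Z μ)
    {φ : (Fin p → ℝ) → ℝ} (hφ : Measurable φ) (hint : Integrable (fun ω => φ (Z ω)) μ)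
    {c : ℝ} (hc : μ[fun ω => φ (Z ω)|m'] =ᵐ[μ] fun _ => c)
    {B : Set (ℝ × ℝ)} (hB : MeasurableSet B) :
    ∫ ω in Y ⁻¹' B, φ (Z ω) ∂μ = c * (μ (Y ⁻¹' B)).toReal := by
  set κ := μ⟦Y ⁻¹' B | m'⟧ with hκdef
  have hκsm : StronglyMeasurable[m'] κ := stronglyMeasurable_condExp
  have hκmeas : Measurable κ := (hκsm.measurable).mono hm' le_rfl
  have hindB : Integrable (Set.indicator (Y ⁻¹' B) (fun _ => (1:ℝ))) μ :=
    (integrable_const 1).indicator (hY hB)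
  have hκ0 : 0 ≤ᵐ[μ] κ := condExp_nonneg (by
    refine Filter.Eventually.of_forall (fun ω => ?_)
    by_cases h : ω ∈ Y ⁻¹' B <;> simp [Set.indicator_apply, h])
  have hκ1 : κ ≤ᵐ[μ] fun _ => (1:ℝ) := by
    have h1 : μ[fun _ => (1:ℝ)|m'] = fun _ => (1:ℝ) := condExp_const hm' 1
    have := condExp_mono (m := m') hindB (integrable_const (1:ℝ))
      (Filter.Eventually.of_forall (fun ω => by
        by_cases h : ω ∈ Y ⁻¹' B <;> simp [Set.indicator_apply, h]))
    rwa [h1] at this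
  have hκint : Integrable κ μ := integrable_condExp
  have hintκ : ∀ {g : Ω → ℝ}, Integrable g μ → Integrable (fun ω => κ ω * g ω) μ := by
    intro g hg
    refine Integrable.mono' hg.norm
      (hκmeas.aestronglyMeasurable.mul hg.aestronglyMeasurable) ?_
    filter_upwards [hκ0, hκ1] with ω h0 h1
    simp only [Pi.zero_apply] at h0
    have : |κ ω| ≤ 1 := abs_le.mpr ⟨by linarith, h1⟩
    calc ‖κ ω * g ω‖ = |κ ω| * |g ω| := abs_mul _ _
      _ ≤ 1 * |g ω| := by
          exact mul_le_mul_of_nonneg_right this (abs_nonneg _)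
      _ = ‖g ω‖ := by simp
  have hκtot : ∫ ω, κ ω ∂μ = (μ (Y ⁻¹' B)).toReal := by
    rw [hκdef, integral_condExp hm', integral_indicator (hY hB), setIntegral_const,
      smul_eq_mul, mul_one, measureReal_def]
  -- claim1 : set integrals of κ over Z-preimages
  have claim1 : ∀ s : Set (Fin p → ℝ), MeasurableSet s →
      (μ (Z ⁻¹' s ∩ Y ⁻¹' B)).toReal = ∫ ω in Z ⁻¹' s, κ ω ∂μ := by
    intro s hs
    have h := (condIndepFun_iff_condExp_inter_preimage_eq_mul (hm' := hm') hY hZ).mp hci B s hB hs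
    have e1 : ∫ ω, (μ⟦Y ⁻¹' B ∩ Z ⁻¹' s|m'⟧) ω ∂μ = (μ (Y ⁻¹' B ∩ Z ⁻¹' s)).toReal := by
      rw [integral_condExp hm', integral_indicator ((hY hB).inter (hZ hs)), setIntegral_const,
        smul_eq_mul, mul_one, measureReal_def]
    have pull : μ[fun ω => κ ω * Set.indicator (Z ⁻¹' s) (fun _ => (1:ℝ)) ω|m']
        =ᵐ[μ] fun ω => κ ω * (μ⟦Z ⁻¹' s|m'⟧) ω := by
      have := condExp_mul_of_stronglyMeasurable_left (m := m') (μ := μ) hκsm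
        (f := κ) (g := Set.indicator (Z ⁻¹' s) (fun _ => (1:ℝ)))
        (hintκ ((integrable_const 1).indicator (hZ hs)))
        ((integrable_const 1).indicator (hZ hs))
      exact this
    have e2 : ∫ ω, κ ω * (μ⟦Z ⁻¹' s|m'⟧) ω ∂μ
        = ∫ ω, κ ω * Set.indicator (Z ⁻¹' s) (fun _ => (1:ℝ)) ω ∂μ := by
      rw [← integral_congr_ae pull, integral_condExp hm']
    have e3 : ∫ ω, κ ω * Set.indicator (Z ⁻¹' s) (fun _ => (1:ℝ)) ω ∂μ
        = ∫ ω in Z ⁻¹' s, κ ω ∂μ := by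
      rw [← integral_indicator (hZ hs)]
      congr 1; funext ω
      by_cases h : ω ∈ Z ⁻¹' s <;> simp [Set.indicator_apply, h]
    have e4 : ∫ ω, (μ⟦Y ⁻¹' B ∩ Z ⁻¹' s|m'⟧) ω ∂μ
        = ∫ ω, κ ω * (μ⟦Z ⁻¹' s|m'⟧) ω ∂μ := integral_congr_ae h
    rw [Set.inter_comm, ← e1, e4, e2, e3]
  -- measure map equality
  have hmapeq : Measure.map Z (μ.restrict (Y ⁻¹' B)) =
      Measure.map Z (μ.withDensity (fun ω => ENNReal.ofReal (κ ω))) := by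
    ext s hs
    rw [Measure.map_apply hZ hs, Measure.map_apply hZ hs, Measure.restrict_apply (hZ hs),
      withDensity_apply _ (hZ hs)]
    have e5 : ∫⁻ ω in Z ⁻¹' s, ENNReal.ofReal (κ ω) ∂μ
        = ENNReal.ofReal (∫ ω in Z ⁻¹' s, κ ω ∂μ) :=
      (ofReal_integral_eq_lintegral_ofReal hκint.integrableOn (ae_restrict_of_ae hκ0)).symm
    rw [e5, ← claim1 s hs, ENNReal.ofReal_toReal (measure_ne_top μ _)]
  -- main calc
  have hsmφ : AEStronglyMeasurable φ (Measure.map Z (μ.restrict (Y ⁻¹' B))) :=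
    hφ.aestronglyMeasurable
  have hsmφ2 : AEStronglyMeasurable φ
      (Measure.map Z (μ.withDensity (fun ω => ENNReal.ofReal (κ ω)))) :=
    hφ.aestronglyMeasurable
  have key : ∫ ω in Y ⁻¹' B, φ (Z ω) ∂μ = ∫ ω, κ ω * φ (Z ω) ∂μ := by
    have i1 : ∫ ω in Y ⁻¹' B, φ (Z ω) ∂μ
        = ∫ x, φ x ∂(Measure.map Z (μ.restrict (Y ⁻¹' B))) :=
      (integral_map hZ.aemeasurable hsmφ).symm
    have i2 : ∫ x, φ x ∂(Measure.map Z (μ.withDensity (fun ω => ENNReal.ofReal (κ ω))))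
        = ∫ ω, φ (Z ω) ∂(μ.withDensity (fun ω => ENNReal.ofReal (κ ω))) :=
      integral_map hZ.aemeasurable hsmφ2
    have i3 : ∫ ω, φ (Z ω) ∂(μ.withDensity (fun ω => ENNReal.ofReal (κ ω)))
        = ∫ ω, Real.toNNReal (κ ω) • φ (Z ω) ∂μ := by
      exact integral_withDensity_eq_integral_smul
        (measurable_real_toNNReal.comp hκmeas) _
    have i4 : ∫ ω, Real.toNNReal (κ ω) • φ (Z ω) ∂μ = ∫ ω, κ ω * φ (Z ω) ∂μ := by
      refine integral_congr_ae ?_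
      filter_upwards [hκ0] with ω h0
      rw [NNReal.smul_def, smul_eq_mul, Real.coe_toNNReal _ h0]
    rw [i1, hmapeq, i2, i3, i4]
  rw [key]
  have pull2 : μ[fun ω => κ ω * φ (Z ω)|m'] =ᵐ[μ] fun ω => κ ω * (μ[fun ω' => φ (Z ω')|m']) ω :=
    condExp_mul_of_stronglyMeasurable_left hκsm (hintκ hint) hint
  have e6 : ∫ ω, κ ω * φ (Z ω) ∂μ = ∫ ω, κ ω * (μ[fun ω' => φ (Z ω')|m']) ω ∂μ := by
    rw [← integral_congr_ae pull2, integral_condExp hm']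
  have e7 : ∫ ω, κ ω * (μ[fun ω' => φ (Z ω')|m']) ω ∂μ = ∫ ω, κ ω * c ∂μ := by
    refine integral_congr_ae ?_
    filter_upwards [hc] with ω h; rw [h]
  rw [e6, e7, integral_mul_const, hκtot, mul_comm]

lemma stepC {Ω : Type*} [mΩ : MeasurableSpace Ω]
    (μ : Measure Ω) [IsProbabilityMeasure μ]
    {T C : Ω → ℝ} (hT : Measurable T) (hC : Measurable C)
    {G : Ω × Ω → ℝ} (hG : Integrable G (μ.prod μ)) (c : ℝ)
    (hrect : ∀ B₁ B₂ : Set (ℝ × ℝ), MeasurableSet B₁ → MeasurableSet B₂ →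
      ∫ ϖ in ((fun ω => (T ω, C ω)) ⁻¹' B₁) ×ˢ ((fun ω => (T ω, C ω)) ⁻¹' B₂), G ϖ ∂(μ.prod μ)
        = c * ((μ ((fun ω => (T ω, C ω)) ⁻¹' B₁)).toReal
             * (μ ((fun ω => (T ω, C ω)) ⁻¹' B₂)).toReal)) :
    (fun _ => c) =ᵐ[μ.prod μ]
      (μ.prod μ)[G | MeasurableSpace.comap (obsTC T C) inferInstance] := by
  have hY : Measurable (fun ω => (T ω, C ω)) := hT.prodMk hC
  have hobs : Measurable (obsTC T C) :=
    (hT.comp measurable_fst).prodMk ((hT.comp measurable_snd).prodMk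
      ((hC.comp measurable_fst).prodMk (hC.comp measurable_snd)))
  have hmle : MeasurableSpace.comap (obsTC T C) inferInstance ≤
      (Prod.instMeasurableSpace : MeasurableSpace (Ω × Ω)) := hobs.comap_le
  set π : Set (Set (Ω × Ω)) := {s | ∃ B₁ B₂ : Set (ℝ × ℝ), MeasurableSet B₁ ∧
    MeasurableSet B₂ ∧
    s = ((fun ϖ : Ω × Ω => (T ϖ.1, C ϖ.1)) ⁻¹' B₁)
      ∩ ((fun ϖ : Ω × Ω => (T ϖ.2, C ϖ.2)) ⁻¹' B₂)} with hπdef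
  have hπsys : IsPiSystem π := by
    rintro s ⟨B₁, B₂, hB₁, hB₂, rfl⟩ t ⟨B₁', B₂', hB₁', hB₂', rfl⟩ -
    exact ⟨B₁ ∩ B₁', B₂ ∩ B₂', hB₁.inter hB₁', hB₂.inter hB₂', by
      ext ϖ; simp [Set.mem_inter_iff]; tauto⟩
  have hgen : MeasurableSpace.comap (obsTC T C) inferInstance
      = MeasurableSpace.generateFrom π := by
    refine le_antisymm ?_ ?_
    · have hY1 : @Measurable _ _ (MeasurableSpace.generateFrom π) _
          (fun ϖ : Ω × Ω => (T ϖ.1, C ϖ.1)) := by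
        intro B hB
        refine MeasurableSpace.measurableSet_generateFrom ?_
        exact ⟨B, Set.univ, hB, MeasurableSet.univ, by simp⟩
      have hY2 : @Measurable _ _ (MeasurableSpace.generateFrom π) _
          (fun ϖ : Ω × Ω => (T ϖ.2, C ϖ.2)) := by
        intro B hB
        refine MeasurableSpace.measurableSet_generateFrom ?_
        exact ⟨Set.univ, B, MeasurableSet.univ, hB, by simp⟩
      have : @Measurable _ _ (MeasurableSpace.generateFrom π) _ (obsTC T C) := by
        have h1 := measurable_fst.comp hY1
        have h2 := measurable_fst.comp hY2
        have h3 := measurable_snd.comp hY1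
        have h4 := measurable_snd.comp hY2
        exact h1.prodMk (h2.prodMk (h3.prodMk h4))
      exact this.comap_le
    · refine MeasurableSpace.generateFrom_le ?_
      rintro t ⟨B₁, B₂, hB₁, hB₂, rfl⟩
      have hg1 : Measurable (fun x : ℝ × ℝ × ℝ × ℝ => (x.1, x.2.2.1)) :=
        measurable_fst.prodMk (measurable_fst.comp (measurable_snd.comp measurable_snd))
      have hg2 : Measurable (fun x : ℝ × ℝ × ℝ × ℝ => (x.2.1, x.2.2.2)) :=
        (measurable_fst.comp measurable_snd).prodMk
          (measurable_snd.comp (measurable_snd.comp measurable_snd))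
      exact MeasurableSet.inter ⟨_, hg1 hB₁, rfl⟩ ⟨_, hg2 hB₂, rfl⟩
  have htot : ∫ ϖ, G ϖ ∂(μ.prod μ) = c := by
    have := hrect Set.univ Set.univ MeasurableSet.univ MeasurableSet.univ
    simpa [Set.preimage_univ, Set.univ_prod_univ, measure_univ] using this
  have main : ∀ t : Set (Ω × Ω),
      MeasurableSet[MeasurableSpace.comap (obsTC T C) inferInstance] t →
      ∫ ϖ in t, G ϖ ∂(μ.prod μ) = c * ((μ.prod μ) t).toReal := by
    refine MeasurableSpace.induction_on_inter (m := MeasurableSpace.comap (obsTC T C) inferInstance) hgen hπsys ?_ ?_ ?_ ?_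
    · simp
    · rintro t ⟨B₁, B₂, hB₁, hB₂, rfl⟩
      have e : ((fun ϖ : Ω × Ω => (T ϖ.1, C ϖ.1)) ⁻¹' B₁)
            ∩ ((fun ϖ : Ω × Ω => (T ϖ.2, C ϖ.2)) ⁻¹' B₂)
          = ((fun ω => (T ω, C ω)) ⁻¹' B₁) ×ˢ ((fun ω => (T ω, C ω)) ⁻¹' B₂) := by
        rw [Set.prod_eq]; rfl
      rw [e, hrect B₁ B₂ hB₁ hB₂, Measure.prod_prod, ENNReal.toReal_mul]
    · intro t htm hrec
      have htamb : MeasurableSet t := hmle _ htm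
      have hsplit := integral_add_compl htamb hG
      have hμc : ((μ.prod μ) tᶜ).toReal = 1 - ((μ.prod μ) t).toReal := by
        rw [measure_compl htamb (measure_ne_top _ _), measure_univ,
          ENNReal.toReal_sub_of_le prob_le_one (by simp)]
        simp
      rw [hμc]
      have : ∫ ϖ in tᶜ, G ϖ ∂(μ.prod μ) = c - ∫ ϖ in t, G ϖ ∂(μ.prod μ) := by
        rw [← htot]; linarith [hsplit]
      rw [this, hrec]; ring
    · intro f hd hfm hrec
      have hfamb : ∀ i, MeasurableSet (f i) := fun i => hmle _ (hfm i)
      rw [integral_iUnion hfamb hd hG.integrableOn, measure_iUnion hd hfamb,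
        ENNReal.tsum_toReal_eq (fun i => measure_ne_top _ _)]
      rw [← tsum_mul_left]
      exact tsum_congr fun i => hrec i
  exact ae_eq_condExp_of_forall_setIntegral_eq hmle hG
    (fun s _ _ => (integrable_const c).integrableOn)
    (fun s hs _ => by rw [setIntegral_const, smul_eq_mul, main s hs, mul_comm, measureReal_def])
    (stronglyMeasurable_const.aestronglyMeasurable)

lemma L2mul' {α : Type*} [MeasurableSpace α] {μ : Measure α} {f g : α → ℝ}
    (hf : MemLp f 2 μ) (hg : MemLp g 2 μ) :
    Integrable (fun x => f x * g x) μ := by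
  have h : (1 : ℝ≥0∞) / 1 = 1/2 + 1/2 := by
    rw [ENNReal.div_add_div_same, one_add_one_eq_two,
      ENNReal.div_self two_ne_zero ENNReal.ofNat_ne_top, div_one]
  have := (hf.smul hg : MemLp (g • f) 1 μ)
  rw [memLp_one_iff_integrable] at this
  exact (by simpa [Pi.smul_apply, smul_eq_mul, mul_comm] using this : Integrable (f * g) μ)

lemma stepD {Ω : Type*} [mΩ : MeasurableSpace Ω] (μ : Measure Ω) [IsProbabilityMeasure μ]
    {U V : Ω → ℝ} (hU : MemLp U 2 μ) (hV : MemLp V 2 μ)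
    (A₁ A₂ : Set Ω) {d : ℝ}
    (hU₁ : ∫ ω in A₁, U ω ∂μ = 0) (hU₂ : ∫ ω in A₂, U ω ∂μ = 0)
    (hUV₁ : ∫ ω in A₁, U ω * V ω ∂μ = d * (μ A₁).toReal)
    (hUV₂ : ∫ ω in A₂, U ω * V ω ∂μ = d * (μ A₂).toReal) :
    ∫ ϖ in A₁ ×ˢ A₂, (U ϖ.1 - U ϖ.2) * (V ϖ.1 - V ϖ.2) ∂(μ.prod μ)
      = (2 * d) * ((μ A₁).toReal * (μ A₂).toReal) := by
  have hUi : Integrable U μ := hU.integrable (by norm_num)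
  have hVi : Integrable V μ := hV.integrable (by norm_num)
  have hUVi : Integrable (fun ω => U ω * V ω) μ := L2mul' hU hV
  rw [← Measure.prod_restrict]
  have I1 : Integrable (fun ϖ : Ω × Ω => (U ϖ.1 * V ϖ.1) * (1:ℝ))
      ((μ.restrict A₁).prod (μ.restrict A₂)) :=
    Integrable.mul_prod hUVi.integrableOn (integrable_const 1)
  have I2 : Integrable (fun ϖ : Ω × Ω => (1:ℝ) * (U ϖ.2 * V ϖ.2))
      ((μ.restrict A₁).prod (μ.restrict A₂)) :=
    Integrable.mul_prod (integrable_const 1) hUVi.integrableOn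
  have I3 : Integrable (fun ϖ : Ω × Ω => U ϖ.1 * V ϖ.2)
      ((μ.restrict A₁).prod (μ.restrict A₂)) :=
    Integrable.mul_prod hUi.integrableOn hVi.integrableOn
  have I4 : Integrable (fun ϖ : Ω × Ω => V ϖ.1 * U ϖ.2)
      ((μ.restrict A₁).prod (μ.restrict A₂)) :=
    Integrable.mul_prod hVi.integrableOn hUi.integrableOn
  have hcongr : ∫ ϖ, (U ϖ.1 - U ϖ.2) * (V ϖ.1 - V ϖ.2)
        ∂((μ.restrict A₁).prod (μ.restrict A₂))
      = ∫ ϖ, (((U ϖ.1 * V ϖ.1) * (1:ℝ) + (1:ℝ) * (U ϖ.2 * V ϖ.2))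
          - (U ϖ.1 * V ϖ.2 + V ϖ.1 * U ϖ.2)) ∂((μ.restrict A₁).prod (μ.restrict A₂)) :=
    integral_congr_ae (Filter.Eventually.of_forall (fun ϖ => by ring))
  have e1 : ∫ ϖ : Ω × Ω, (U ϖ.1 * V ϖ.1) * (1:ℝ) ∂((μ.restrict A₁).prod (μ.restrict A₂))
      = (∫ ω in A₁, U ω * V ω ∂μ) * ∫ _ in A₂, (1:ℝ) ∂μ :=
    integral_prod_mul (fun ω => U ω * V ω) (fun _ => (1:ℝ))
  have e2 : ∫ ϖ : Ω × Ω, (1:ℝ) * (U ϖ.2 * V ϖ.2) ∂((μ.restrict A₁).prod (μ.restrict A₂))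
      = (∫ _ in A₁, (1:ℝ) ∂μ) * ∫ ω in A₂, U ω * V ω ∂μ :=
    integral_prod_mul (fun _ => (1:ℝ)) (fun ω => U ω * V ω)
  have e3 : ∫ ϖ : Ω × Ω, U ϖ.1 * V ϖ.2 ∂((μ.restrict A₁).prod (μ.restrict A₂))
      = (∫ ω in A₁, U ω ∂μ) * ∫ ω in A₂, V ω ∂μ := integral_prod_mul U V
  have e4 : ∫ ϖ : Ω × Ω, V ϖ.1 * U ϖ.2 ∂((μ.restrict A₁).prod (μ.restrict A₂))
      = (∫ ω in A₁, V ω ∂μ) * ∫ ω in A₂, U ω ∂μ := integral_prod_mul V U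
  have esub : ∫ ϖ : Ω × Ω, (((U ϖ.1 * V ϖ.1) * (1:ℝ) + (1:ℝ) * (U ϖ.2 * V ϖ.2))
          - (U ϖ.1 * V ϖ.2 + V ϖ.1 * U ϖ.2)) ∂((μ.restrict A₁).prod (μ.restrict A₂))
      = (∫ ϖ : Ω × Ω, ((U ϖ.1 * V ϖ.1) * (1:ℝ) + (1:ℝ) * (U ϖ.2 * V ϖ.2))
          ∂((μ.restrict A₁).prod (μ.restrict A₂)))
        - ∫ ϖ : Ω × Ω, (U ϖ.1 * V ϖ.2 + V ϖ.1 * U ϖ.2)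
          ∂((μ.restrict A₁).prod (μ.restrict A₂)) := integral_sub (I1.add I2) (I3.add I4)
  have eadd1 : ∫ ϖ : Ω × Ω, ((U ϖ.1 * V ϖ.1) * (1:ℝ) + (1:ℝ) * (U ϖ.2 * V ϖ.2))
          ∂((μ.restrict A₁).prod (μ.restrict A₂))
      = (∫ ϖ : Ω × Ω, (U ϖ.1 * V ϖ.1) * (1:ℝ) ∂((μ.restrict A₁).prod (μ.restrict A₂)))
        + ∫ ϖ : Ω × Ω, (1:ℝ) * (U ϖ.2 * V ϖ.2) ∂((μ.restrict A₁).prod (μ.restrict A₂)) :=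
    integral_add I1 I2
  have eadd2 : ∫ ϖ : Ω × Ω, (U ϖ.1 * V ϖ.2 + V ϖ.1 * U ϖ.2)
          ∂((μ.restrict A₁).prod (μ.restrict A₂))
      = (∫ ϖ : Ω × Ω, U ϖ.1 * V ϖ.2 ∂((μ.restrict A₁).prod (μ.restrict A₂)))
        + ∫ ϖ : Ω × Ω, V ϖ.1 * U ϖ.2 ∂((μ.restrict A₁).prod (μ.restrict A₂)) :=
    integral_add I3 I4
  rw [hcongr, esub, eadd1, eadd2, e1, e2, e3, e4, hU₁, hU₂, hUV₁, hUV₂,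
    setIntegral_const, setIntegral_const]
  simp only [smul_eq_mul, mul_one, zero_mul, mul_zero, measureReal_def]
  ring
lemma memLp2_fst {Ω : Type*} [MeasurableSpace Ω] (μ : Measure Ω) [IsProbabilityMeasure μ]
    {f : Ω → ℝ} (hm : Measurable f) (hf : MemLp f 2 μ) :
    MemLp (fun ϖ : Ω × Ω => f ϖ.1) 2 (μ.prod μ) := by
  have h1 : MemLp f 2 (Measure.map Prod.fst (μ.prod μ)) := by
    rw [Measure.map_fst_prod]; simpa [measure_univ] using hf
  exact (memLp_map_measure_iff hm.aestronglyMeasurable measurable_fst.aemeasurable).mp h1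

lemma memLp2_snd {Ω : Type*} [MeasurableSpace Ω] (μ : Measure Ω) [IsProbabilityMeasure μ]
    {f : Ω → ℝ} (hm : Measurable f) (hf : MemLp f 2 μ) :
    MemLp (fun ϖ : Ω × Ω => f ϖ.2) 2 (μ.prod μ) := by
  have h1 : MemLp f 2 (Measure.map Prod.snd (μ.prod μ)) := by
    rw [Measure.map_snd_prod]; simpa [measure_univ] using hf
  exact (memLp_map_measure_iff hm.aestronglyMeasurable measurable_snd.aemeasurable).mp h1

lemma keyLemma {Ω : Type*} {m' : MeasurableSpace Ω} [mΩ : MeasurableSpace Ω]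
    [StandardBorelSpace Ω]
    (μ : Measure Ω) [IsProbabilityMeasure μ] {p : ℕ}
    {Z : Ω → Fin p → ℝ} (hZ : Measurable Z)
    {T C : Ω → ℝ} (hT : Measurable T) (hC : Measurable C)
    (hm' : m' ≤ mΩ)
    (hci : CondIndepFun m' hm' (fun ω => (T ω, C ω)) Z μ)
    {φU φV : (Fin p → ℝ) → ℝ} (hφU : Measurable φU) (hφV : Measurable φV)
    (hU2 : MemLp (fun ω => φU (Z ω)) 2 μ) (hV2 : MemLp (fun ω => φV (Z ω)) 2 μ)
    (hUc : μ[fun ω => φU (Z ω)|m'] =ᵐ[μ] fun _ => (0:ℝ))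
    {d : ℝ} (hUVc : μ[fun ω => φU (Z ω) * φV (Z ω)|m'] =ᵐ[μ] fun _ => d) :
    (fun _ => 2*d) =ᵐ[μ.prod μ]
      (μ.prod μ)[fun ϖ => (φU (Z ϖ.1) - φU (Z ϖ.2)) * (φV (Z ϖ.1) - φV (Z ϖ.2)) |
        MeasurableSpace.comap (obsTC T C) inferInstance] := by
  have hY : Measurable (fun ω => (T ω, C ω)) := hT.prodMk hC
  have hUm : Measurable (fun ω => φU (Z ω)) := hφU.comp hZ
  have hVm : Measurable (fun ω => φV (Z ω)) := hφV.comp hZ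
  have hG : Integrable (fun ϖ : Ω × Ω => (φU (Z ϖ.1) - φU (Z ϖ.2)) * (φV (Z ϖ.1) - φV (Z ϖ.2)))
      (μ.prod μ) := by
    have h1 : MemLp (fun ϖ : Ω × Ω => φU (Z ϖ.1) - φU (Z ϖ.2)) 2 (μ.prod μ) :=
      (memLp2_fst μ hUm hU2).sub (memLp2_snd μ hUm hU2)
    have h2 : MemLp (fun ϖ : Ω × Ω => φV (Z ϖ.1) - φV (Z ϖ.2)) 2 (μ.prod μ) :=
      (memLp2_fst μ hVm hV2).sub (memLp2_snd μ hVm hV2)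
    exact L2mul' h1 h2
  refine stepC μ hT hC hG (2*d) ?_
  intro B₁ B₂ hB₁ hB₂
  have hUV2 : Integrable (fun ω => φU (Z ω) * φV (Z ω)) μ := L2mul' hU2 hV2
  have hUB : ∀ B : Set (ℝ × ℝ), MeasurableSet B →
      ∫ ω in (fun ω => (T ω, C ω)) ⁻¹' B, φU (Z ω) ∂μ = 0 := by
    intro B hB
    rw [stepB μ hZ hY hm' hci hφU (hU2.integrable one_le_two) hUc hB]; ring
  have hUVB : ∀ B : Set (ℝ × ℝ), MeasurableSet B →
      ∫ ω in (fun ω => (T ω, C ω)) ⁻¹' B, φU (Z ω) * φV (Z ω) ∂μ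
        = d * (μ ((fun ω => (T ω, C ω)) ⁻¹' B)).toReal := by
    intro B hB
    exact stepB μ hZ hY hm' hci (hφU.mul hφV) hUV2 hUVc hB
  have := stepD μ hU2 hV2 ((fun ω => (T ω, C ω)) ⁻¹' B₁) ((fun ω => (T ω, C ω)) ⁻¹' B₂)
    (hUB B₁ hB₁) (hUB B₂ hB₂) (hUVB B₁ hB₁) (hUVB B₂ hB₂)
  exact this
lemma condMain {Ω : Type*} {m' : MeasurableSpace Ω} [mΩ : MeasurableSpace Ω]
    (μ : Measure Ω) [IsProbabilityMeasure μ] {p : ℕ}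
    {Z : Ω → Fin p → ℝ} (hZ : Measurable Z)
    (hdot2 : ∀ v : Fin p → ℝ, MemLp (fun ω => v ⬝ᵥ Z ω) 2 μ)
    (hdotint : ∀ v w : Fin p → ℝ, ∫ ω, (v ⬝ᵥ Z ω) * (w ⬝ᵥ Z ω) ∂μ = v ⬝ᵥ w)
    {P : Matrix (Fin p) (Fin p) ℝ} (hPsymm : Pᵀ = P)
    (hm'eq : m' = MeasurableSpace.comap (fun ω => P.mulVec (Z ω)) inferInstance)
    (hm' : m' ≤ mΩ)
    {S : Submodule ℝ (Fin p → ℝ)}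
    (hPν : ∀ ν : Fin p → ℝ, (∀ u ∈ S, ν ⬝ᵥ u = 0) → P.mulVec ν = 0)
    (hperpP : ∀ w : Fin p → ℝ, ∀ u ∈ S, ((1 - P).mulVec w) ⬝ᵥ u = 0)
    (hA1 : ∀ ν : Fin p → ℝ, (∀ u ∈ S, ν ⬝ᵥ u = 0) →
      ∃ a : Fin p → ℝ, μ[fun ω => ν ⬝ᵥ Z ω|m'] =ᵐ[μ] fun ω => a ⬝ᵥ P.mulVec (Z ω))
    (hA2 : ∀ ν : Fin p → ℝ, (∀ u ∈ S, ν ⬝ᵥ u = 0) →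
      ∃ c : ℝ, (fun ω => (μ[fun ω' => (ν ⬝ᵥ Z ω') ^ 2|m']) ω
        - ((μ[fun ω' => ν ⬝ᵥ Z ω'|m']) ω) ^ 2) =ᵐ[μ] fun _ => c) :
    (∀ ν : Fin p → ℝ, (∀ u ∈ S, ν ⬝ᵥ u = 0) →
        μ[fun ω => ν ⬝ᵥ Z ω|m'] =ᵐ[μ] fun _ => (0:ℝ)) ∧
    (∀ ν : Fin p → ℝ, (∀ u ∈ S, ν ⬝ᵥ u = 0) → ∀ w : Fin p → ℝ,
        μ[fun ω => (ν ⬝ᵥ Z ω) * (w ⬝ᵥ Z ω)|m'] =ᵐ[μ] fun _ => ν ⬝ᵥ ((1 - P).mulVec w)) := by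
  subst hm'eq
  have hmulint : ∀ v w : Fin p → ℝ, Integrable (fun ω => (v ⬝ᵥ Z ω) * (w ⬝ᵥ Z ω)) μ :=
    fun v w => L2mul' (hdot2 v) (hdot2 w)
  have hWint : ∀ v : Fin p → ℝ, Integrable (fun ω => v ⬝ᵥ Z ω) μ :=
    fun v => (hdot2 v).integrable one_le_two
  -- Step A-i : E[νᵀZ | PZ] = 0 a.s.
  have part1 : ∀ ν : Fin p → ℝ, (∀ u ∈ S, ν ⬝ᵥ u = 0) →
      μ[fun ω => ν ⬝ᵥ Z ω|MeasurableSpace.comap (fun ω => P.mulVec (Z ω)) inferInstance]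
        =ᵐ[μ] fun _ => (0:ℝ) := by
    intro ν hν
    obtain ⟨a, ha⟩ := hA1 ν hν
    have hg : (fun ω => a ⬝ᵥ P.mulVec (Z ω)) = fun ω => (a ᵥ* P) ⬝ᵥ Z ω := by
      funext ω; rw [Matrix.dotProduct_mulVec]
    have ha' : μ[fun ω => ν ⬝ᵥ Z ω|MeasurableSpace.comap (fun ω => P.mulVec (Z ω)) inferInstance]
        =ᵐ[μ] fun ω => (a ᵥ* P) ⬝ᵥ Z ω := hg ▸ ha
    have hbν : (a ᵥ* P) ⬝ᵥ ν = 0 := by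
      rw [← Matrix.dotProduct_mulVec, hPν ν hν, dotProduct_zero]
    have hgsm : StronglyMeasurable[MeasurableSpace.comap (fun ω => P.mulVec (Z ω)) inferInstance]
        (fun ω => (a ᵥ* P) ⬝ᵥ Z ω) := by
      rw [← hg]
      exact ((measurable_dot' a).comp
        (measurable_comap_self' (fun ω => P.mulVec (Z ω)))).stronglyMeasurable
    have pull : μ[(fun ω => (a ᵥ* P) ⬝ᵥ Z ω) * (fun ω => ν ⬝ᵥ Z ω)|
          MeasurableSpace.comap (fun ω => P.mulVec (Z ω)) inferInstance] =ᵐ[μ]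
        (fun ω => (a ᵥ* P) ⬝ᵥ Z ω) * μ[fun ω => ν ⬝ᵥ Z ω|
          MeasurableSpace.comap (fun ω => P.mulVec (Z ω)) inferInstance] :=
      condExp_mul_of_stronglyMeasurable_left hgsm (hmulint _ ν) (hWint ν)
    have e0 : ∫ ω, ((fun ω => (a ᵥ* P) ⬝ᵥ Z ω) * (fun ω => ν ⬝ᵥ Z ω)) ω ∂μ = 0 := by
      have h := hdotint (a ᵥ* P) ν
      simpa [hbν] using h
    have e1 : ∫ ω, ((fun ω => (a ᵥ* P) ⬝ᵥ Z ω) * μ[fun ω => ν ⬝ᵥ Z ω|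
          MeasurableSpace.comap (fun ω => P.mulVec (Z ω)) inferInstance]) ω ∂μ = 0 := by
      rw [← integral_congr_ae pull, integral_condExp hm']
      exact e0
    have e2 : ∫ ω, ((a ᵥ* P) ⬝ᵥ Z ω) * ((a ᵥ* P) ⬝ᵥ Z ω) ∂μ = 0 := by
      have hcongr : ((fun ω => (a ᵥ* P) ⬝ᵥ Z ω) * μ[fun ω => ν ⬝ᵥ Z ω|
            MeasurableSpace.comap (fun ω => P.mulVec (Z ω)) inferInstance]) =ᵐ[μ]
          fun ω => ((a ᵥ* P) ⬝ᵥ Z ω) * ((a ᵥ* P) ⬝ᵥ Z ω) := by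
        filter_upwards [ha'] with ω h
        simp only [Pi.mul_apply]
        rw [h]
      rw [← integral_congr_ae hcongr]
      exact e1
    have hzero : (fun ω => ((a ᵥ* P) ⬝ᵥ Z ω) * ((a ᵥ* P) ⬝ᵥ Z ω)) =ᵐ[μ] 0 :=
      (integral_eq_zero_iff_of_nonneg (fun ω => mul_self_nonneg _) (hmulint _ _)).mp e2
    refine ha'.trans ?_
    filter_upwards [hzero] with ω h
    simp only [Pi.zero_apply] at h
    exact mul_self_eq_zero.mp h
  -- Step A-ii : E[(νᵀZ)² | PZ] = νᵀν a.s.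
  have part2 : ∀ ν : Fin p → ℝ, (∀ u ∈ S, ν ⬝ᵥ u = 0) →
      μ[fun ω => (ν ⬝ᵥ Z ω) ^ 2|MeasurableSpace.comap (fun ω => P.mulVec (Z ω)) inferInstance]
        =ᵐ[μ] fun _ => ν ⬝ᵥ ν := by
    intro ν hν
    obtain ⟨c, hc⟩ := hA2 ν hν
    have hstep : μ[fun ω => (ν ⬝ᵥ Z ω) ^ 2|
        MeasurableSpace.comap (fun ω => P.mulVec (Z ω)) inferInstance] =ᵐ[μ] fun _ => c := by
      filter_upwards [hc, part1 ν hν] with ω h1 h2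
      rw [h2] at h1
      simpa using h1
    have hsqint : Integrable (fun ω => (ν ⬝ᵥ Z ω) ^ 2) μ := by
      simpa [pow_two] using hmulint ν ν
    have hcval : c = ν ⬝ᵥ ν := by
      have e1 : ∫ ω, (μ[fun ω' => (ν ⬝ᵥ Z ω') ^ 2|
            MeasurableSpace.comap (fun ω => P.mulVec (Z ω)) inferInstance]) ω ∂μ
          = ∫ _ω, (fun _ : Ω => c) _ω ∂μ := integral_congr_ae hstep
      rw [integral_condExp hm'] at e1
      simp only [integral_const, measure_univ, ENNReal.toReal_one, smul_eq_mul, one_mul, probReal_univ] at e1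
      have e2 : ∫ ω, (ν ⬝ᵥ Z ω) ^ 2 ∂μ = ν ⬝ᵥ ν := by
        have h := hdotint ν ν
        simpa [pow_two] using h
      rw [e2] at e1
      exact e1.symm
    exact hcval ▸ hstep
  -- Step A-iii : polarization
  have part3 : ∀ ν ν' : Fin p → ℝ, (∀ u ∈ S, ν ⬝ᵥ u = 0) → (∀ u ∈ S, ν' ⬝ᵥ u = 0) →
      μ[fun ω => (ν ⬝ᵥ Z ω) * (ν' ⬝ᵥ Z ω)|
        MeasurableSpace.comap (fun ω => P.mulVec (Z ω)) inferInstance]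
        =ᵐ[μ] fun _ => ν ⬝ᵥ ν' := by
    intro ν ν' hν hν'
    have hsum : ∀ u ∈ S, (ν + ν') ⬝ᵥ u = 0 := fun u hu => by
      rw [add_dotProduct, hν u hu, hν' u hu, add_zero]
    have h1 := part2 (ν + ν') hsum
    have h2 := part2 ν hν
    have h3 := part2 ν' hν'
    have i1 : Integrable (fun ω => ((ν + ν') ⬝ᵥ Z ω) ^ 2) μ := by
      simpa [pow_two] using hmulint (ν + ν') (ν + ν')
    have i2 : Integrable (fun ω => (ν ⬝ᵥ Z ω) ^ 2) μ := by
      simpa [pow_two] using hmulint ν ν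
    have i3 : Integrable (fun ω => (ν' ⬝ᵥ Z ω) ^ 2) μ := by
      simpa [pow_two] using hmulint ν' ν'
    have hs1 : μ[(fun ω => ((ν + ν') ⬝ᵥ Z ω) ^ 2) - (fun ω => (ν ⬝ᵥ Z ω) ^ 2)|
          MeasurableSpace.comap (fun ω => P.mulVec (Z ω)) inferInstance] =ᵐ[μ]
        μ[fun ω => ((ν + ν') ⬝ᵥ Z ω) ^ 2|
          MeasurableSpace.comap (fun ω => P.mulVec (Z ω)) inferInstance]
        - μ[fun ω => (ν ⬝ᵥ Z ω) ^ 2|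
          MeasurableSpace.comap (fun ω => P.mulVec (Z ω)) inferInstance] := condExp_sub i1 i2 _
    have hs2 : μ[((fun ω => ((ν + ν') ⬝ᵥ Z ω) ^ 2) - (fun ω => (ν ⬝ᵥ Z ω) ^ 2))
          - (fun ω => (ν' ⬝ᵥ Z ω) ^ 2)|
          MeasurableSpace.comap (fun ω => P.mulVec (Z ω)) inferInstance] =ᵐ[μ]
        μ[(fun ω => ((ν + ν') ⬝ᵥ Z ω) ^ 2) - (fun ω => (ν ⬝ᵥ Z ω) ^ 2)|
          MeasurableSpace.comap (fun ω => P.mulVec (Z ω)) inferInstance]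
        - μ[fun ω => (ν' ⬝ᵥ Z ω) ^ 2|
          MeasurableSpace.comap (fun ω => P.mulVec (Z ω)) inferInstance] :=
      condExp_sub (i1.sub i2) i3 _
    have hsm := condExp_smul (m := MeasurableSpace.comap (fun ω => P.mulVec (Z ω)) inferInstance)
      (μ := μ) (2⁻¹ : ℝ)
      (((fun ω => ((ν + ν') ⬝ᵥ Z ω) ^ 2) - (fun ω => (ν ⬝ᵥ Z ω) ^ 2))
        - (fun ω => (ν' ⬝ᵥ Z ω) ^ 2))
    have hfun : (fun ω => (ν ⬝ᵥ Z ω) * (ν' ⬝ᵥ Z ω))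
        = (2⁻¹ : ℝ) • (((fun ω => ((ν + ν') ⬝ᵥ Z ω) ^ 2) - (fun ω => (ν ⬝ᵥ Z ω) ^ 2))
          - (fun ω => (ν' ⬝ᵥ Z ω) ^ 2)) := by
      funext ω
      simp only [Pi.smul_apply, Pi.sub_apply, smul_eq_mul, add_dotProduct]
      ring
    rw [hfun]
    refine hsm.trans ?_
    filter_upwards [hs1, hs2, h1, h2, h3] with ω e1 e2 e4 e5 e6
    simp only [Pi.smul_apply, Pi.sub_apply, smul_eq_mul]
    rw [e2]
    simp only [Pi.sub_apply]
    rw [e1]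
    simp only [Pi.sub_apply]
    rw [e4, e5, e6]
    simp only [add_dotProduct, dotProduct_add]
    rw [dotProduct_comm ν' ν]
    ring
  -- Step A-iv
  refine ⟨part1, ?_⟩
  intro ν hν w
  have hPwZ : ∀ ω, (P.mulVec w) ⬝ᵥ Z ω = w ⬝ᵥ P.mulVec (Z ω) := by
    intro ω
    rw [dotProduct_comm, Matrix.dotProduct_mulVec, ← Matrix.mulVec_transpose, hPsymm,
      dotProduct_comm]
  have hsymrw : ∀ ω, (ν ⬝ᵥ Z ω) * (w ⬝ᵥ Z ω)
      = (w ⬝ᵥ P.mulVec (Z ω)) * (ν ⬝ᵥ Z ω)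
        + (ν ⬝ᵥ Z ω) * (((1 - P).mulVec w) ⬝ᵥ Z ω) := by
    intro ω
    have hsplit : ((1 - P).mulVec w) ⬝ᵥ Z ω = w ⬝ᵥ Z ω - (P.mulVec w) ⬝ᵥ Z ω := by
      rw [Matrix.sub_mulVec, sub_dotProduct, Matrix.one_mulVec]
    rw [hsplit, hPwZ]
    ring
  have hmix : Integrable (fun ω => (w ⬝ᵥ P.mulVec (Z ω)) * (ν ⬝ᵥ Z ω)) μ := by
    refine (hmulint (w ᵥ* P) ν).congr (Filter.Eventually.of_forall (fun ω => ?_))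
    simp only [Matrix.dotProduct_mulVec]
  have hhsm : StronglyMeasurable[MeasurableSpace.comap (fun ω => P.mulVec (Z ω)) inferInstance]
      (fun ω => w ⬝ᵥ P.mulVec (Z ω)) :=
    ((measurable_dot' w).comp
      (measurable_comap_self' (fun ω => P.mulVec (Z ω)))).stronglyMeasurable
  have pull : μ[fun ω => (w ⬝ᵥ P.mulVec (Z ω)) * (ν ⬝ᵥ Z ω)|
        MeasurableSpace.comap (fun ω => P.mulVec (Z ω)) inferInstance] =ᵐ[μ]
      fun ω => (w ⬝ᵥ P.mulVec (Z ω)) * (μ[fun ω' => ν ⬝ᵥ Z ω'|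
        MeasurableSpace.comap (fun ω' => P.mulVec (Z ω')) inferInstance]) ω :=
    condExp_mul_of_stronglyMeasurable_left hhsm (by exact hmix) (hWint ν)
  have hWW := part3 ν ((1 - P).mulVec w) hν (hperpP w)
  have hadd : μ[(fun ω => (w ⬝ᵥ P.mulVec (Z ω)) * (ν ⬝ᵥ Z ω))
        + (fun ω => (ν ⬝ᵥ Z ω) * (((1 - P).mulVec w) ⬝ᵥ Z ω))|
        MeasurableSpace.comap (fun ω => P.mulVec (Z ω)) inferInstance] =ᵐ[μ]
      μ[fun ω => (w ⬝ᵥ P.mulVec (Z ω)) * (ν ⬝ᵥ Z ω)|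
        MeasurableSpace.comap (fun ω => P.mulVec (Z ω)) inferInstance]
      + μ[fun ω => (ν ⬝ᵥ Z ω) * (((1 - P).mulVec w) ⬝ᵥ Z ω)|
        MeasurableSpace.comap (fun ω => P.mulVec (Z ω)) inferInstance] :=
    condExp_add hmix (hmulint ν _) _
  have hfun2 : (fun ω => (ν ⬝ᵥ Z ω) * (w ⬝ᵥ Z ω))
      = (fun ω => (w ⬝ᵥ P.mulVec (Z ω)) * (ν ⬝ᵥ Z ω))
        + (fun ω => (ν ⬝ᵥ Z ω) * (((1 - P).mulVec w) ⬝ᵥ Z ω)) := by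
    funext ω
    rw [Pi.add_apply]
    exact hsymrw ω
  rw [hfun2]
  refine hadd.trans ?_
  filter_upwards [pull, part1 ν hν, hWW] with ω e1 e2 e3
  have e2' : (μ[fun ω' => ν ⬝ᵥ Z ω'|
      MeasurableSpace.comap (fun ω' => P.mulVec (Z ω')) inferInstance]) ω = 0 := e2
  rw [Pi.add_apply, e1, e3]
  simp [e2']

end AuxiliaryLemmas

/-- `A(T,T̃,C,C̃) = E[(Z−Z̃)(Z−Z̃)ᵀ | T, T̃, C, C̃]`, defined entrywise as a conditional
expectation on the product space `Ω × Ω` (whose second factor carries the independent copy). -/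
def Amat {Ω : Type*} [MeasurableSpace Ω] (μ : Measure Ω) (p : ℕ) (Z : Ω → Fin p → ℝ)
    (T C : Ω → ℝ) (ϖ : Ω × Ω) : Matrix (Fin p) (Fin p) ℝ := fun i j =>
  ((μ.prod μ)[fun ϖ' => (Z ϖ'.1 i - Z ϖ'.2 i) * (Z ϖ'.1 j - Z ϖ'.2 j) |
    MeasurableSpace.comap (obsTC T C) inferInstance]) ϖ

/-- under conditions (A1) and (A2), for every `ν` orthogonal to the central
subspace `S = S_{(T,C)|Z}` one has `νᵀ E[(Z−Z̃)(Z−Z̃)ᵀ | T,T̃,C,C̃] ν = 2 νᵀν` a.s.;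
consequently the column space of `2I_p − E[(Z−Z̃)(Z−Z̃)ᵀ | T,T̃,C,C̃]` is a.s. contained
in `S`. -/
theorem stmt11 {Ω : Type*} [MeasurableSpace Ω] [StandardBorelSpace Ω]
    (μ : Measure Ω) [IsProbabilityMeasure μ]
    (p : ℕ) (X : Ω → Fin p → ℝ) (hX : Measurable X)
    (μv : Fin p → ℝ) (hμv : ∀ i, μv i = ∫ ω, X ω i ∂μ)
    (Sig : Matrix (Fin p) (Fin p) ℝ)
    (hSig : ∀ i j, Sig i j = ∫ ω, (X ω i - μv i) * (X ω j - μv j) ∂μ)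
    (hSigpd : Sig.PosDef)
    -- `R = Σ^{-1/2}` and `Z = Σ^{-1/2}(X − μ)` is the standardized covariate
    (R : Matrix (Fin p) (Fin p) ℝ) (hRpd : R.PosDef) (hRR : R * R = Sig⁻¹)
    (Z : Ω → Fin p → ℝ) (hZdef : ∀ ω, Z ω = R.mulVec (X ω - μv))
    (hZmean : ∀ i, ∫ ω, Z ω i ∂μ = 0)
    (hZcov : ∀ i j, ∫ ω, Z ω i * Z ω j ∂μ = (1 : Matrix (Fin p) (Fin p) ℝ) i j)
    (T C : Ω → ℝ) (hT : Measurable T) (hC : Measurable C)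
    -- the central subspace `S = S_{(T,C)|Z}`, with orthogonal projection matrix `P` onto it
    (S : Submodule ℝ (Fin p → ℝ)) (P : Matrix (Fin p) (Fin p) ℝ)
    (hPsymm : Pᵀ = P) (hPidem : P * P = P)
    (hPrange : ∀ v : Fin p → ℝ, v ∈ S ↔ ∃ w, P.mulVec w = v)
    (hPZmeas : Measurable (fun ω => P.mulVec (Z ω)))
    (hcentral : CondIndepFun (MeasurableSpace.comap (fun ω => P.mulVec (Z ω)) inferInstance)
      hPZmeas.comap_le (fun ω => (T ω, C ω)) Z μ)
    (hmin : ∀ (S' : Submodule ℝ (Fin p → ℝ)) (P' : Matrix (Fin p) (Fin p) ℝ),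
      P'ᵀ = P' → P' * P' = P' → (∀ v, v ∈ S' ↔ ∃ w, P'.mulVec w = v) →
      ∀ hP'Z : Measurable (fun ω => P'.mulVec (Z ω)),
      CondIndepFun (MeasurableSpace.comap (fun ω => P'.mulVec (Z ω)) inferInstance)
        hP'Z.comap_le (fun ω => (T ω, C ω)) Z μ → S ≤ S')
    -- condition (A1)
    (hA1 : ∀ ν : Fin p → ℝ, (∀ u ∈ S, ν ⬝ᵥ u = 0) →
      ∃ a : Fin p → ℝ,
        μ[fun ω => ν ⬝ᵥ Z ω |
            MeasurableSpace.comap (fun ω => P.mulVec (Z ω)) inferInstance]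
          =ᵐ[μ] fun ω => a ⬝ᵥ P.mulVec (Z ω))
    -- condition (A2)
    (hA2 : ∀ ν : Fin p → ℝ, (∀ u ∈ S, ν ⬝ᵥ u = 0) →
      ∃ c : ℝ,
        (fun ω =>
          (μ[fun ω' => (ν ⬝ᵥ Z ω') ^ 2 |
              MeasurableSpace.comap (fun ω' => P.mulVec (Z ω')) inferInstance]) ω
          - ((μ[fun ω' => ν ⬝ᵥ Z ω' |
              MeasurableSpace.comap (fun ω' => P.mulVec (Z ω')) inferInstance]) ω) ^ 2)
          =ᵐ[μ] fun _ => c) :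
    (∀ ν : Fin p → ℝ, (∀ u ∈ S, ν ⬝ᵥ u = 0) →
      (fun ϖ => ν ⬝ᵥ (Amat μ p Z T C ϖ).mulVec ν) =ᵐ[μ.prod μ] fun _ => 2 * (ν ⬝ᵥ ν)) ∧
    (∀ᵐ ϖ ∂(μ.prod μ),
      Submodule.span ℝ
        (Set.range (((2 : ℝ) • (1 : Matrix (Fin p) (Fin p) ℝ) - Amat μ p Z T C ϖ)ᵀ)) ≤ S) := by
  classical
  -- measurability of Z
  have hZmeas : Measurable Z := by
    have hzz : Z = fun ω => R.mulVec (X ω - μv) := funext hZdef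
    rw [hzz]
    refine measurable_pi_lambda _ (fun i => ?_)
    simp only [Matrix.mulVec, dotProduct, Pi.sub_apply]
    exact Finset.measurable_sum _ (fun j _ =>
      measurable_const.mul (((measurable_pi_apply j).comp hX).sub measurable_const))
  have hZimeas : ∀ i, Measurable (fun ω => Z ω i) :=
    fun i => (measurable_pi_apply i).comp hZmeas
  -- L² facts
  have hZii : ∀ i, Integrable (fun ω => Z ω i * Z ω i) μ := by
    intro i
    by_contra h
    have h2 := hZcov i i
    rw [integral_undef h] at h2
    simp [Matrix.one_apply_eq] at h2
  have hZi2 : ∀ i, MemLp (fun ω => Z ω i) 2 μ := by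
    intro i
    rw [memLp_two_iff_integrable_sq (hZimeas i).aestronglyMeasurable]
    simpa [pow_two] using hZii i
  have hdot2 : ∀ v : Fin p → ℝ, MemLp (fun ω => v ⬝ᵥ Z ω) 2 μ := memLp2_dot hZi2
  have hmulint : ∀ v w : Fin p → ℝ, Integrable (fun ω => (v ⬝ᵥ Z ω) * (w ⬝ᵥ Z ω)) μ :=
    fun v w => L2mul' (hdot2 v) (hdot2 w)
  have hZij : ∀ i j, Integrable (fun ω => Z ω i * Z ω j) μ :=
    fun i j => L2mul' (hZi2 i) (hZi2 j)
  have hdotint : ∀ v w : Fin p → ℝ, ∫ ω, (v ⬝ᵥ Z ω) * (w ⬝ᵥ Z ω) ∂μ = v ⬝ᵥ w := by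
    intro v w
    have hexp : ∀ ω, (v ⬝ᵥ Z ω) * (w ⬝ᵥ Z ω)
        = ∑ i : Fin p, ∑ j : Fin p, (v i * w j) * (Z ω i * Z ω j) := by
      intro ω
      simp only [dotProduct, Finset.sum_mul_sum]
      refine Finset.sum_congr rfl (fun i _ => Finset.sum_congr rfl (fun j _ => by ring))
    calc ∫ ω, (v ⬝ᵥ Z ω) * (w ⬝ᵥ Z ω) ∂μ
        = ∫ ω, ∑ i : Fin p, ∑ j : Fin p, (v i * w j) * (Z ω i * Z ω j) ∂μ :=
          integral_congr_ae (Filter.Eventually.of_forall (fun ω => hexp ω))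
      _ = ∑ i : Fin p, ∫ ω, ∑ j : Fin p, (v i * w j) * (Z ω i * Z ω j) ∂μ :=
          integral_finset_sum _ (fun i _ =>
            integrable_finset_sum _ (fun j _ => (hZij i j).const_mul _))
      _ = ∑ i : Fin p, ∑ j : Fin p, ∫ ω, (v i * w j) * (Z ω i * Z ω j) ∂μ :=
          Finset.sum_congr rfl (fun i _ =>
            integral_finset_sum _ (fun j _ => (hZij i j).const_mul _))
      _ = ∑ i : Fin p, ∑ j : Fin p, (v i * w j) * ((1 : Matrix (Fin p) (Fin p) ℝ) i j) := by
          refine Finset.sum_congr rfl (fun i _ => Finset.sum_congr rfl (fun j _ => ?_))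
          rw [integral_const_mul, hZcov i j]
      _ = v ⬝ᵥ w := by
          simp [Matrix.one_apply, dotProduct, Finset.mul_sum, mul_ite]
  -- projection facts
  have hPu : ∀ u ∈ S, P.mulVec u = u := by
    intro u hu
    obtain ⟨w, rfl⟩ := (hPrange u).mp hu
    rw [Matrix.mulVec_mulVec, hPidem]
  have hPν : ∀ ν : Fin p → ℝ, (∀ u ∈ S, ν ⬝ᵥ u = 0) → P.mulVec ν = 0 := by
    intro ν hν
    have hmem : P.mulVec ν ∈ S := (hPrange _).mpr ⟨ν, rfl⟩
    have h0 : P.mulVec ν ⬝ᵥ P.mulVec ν = 0 := by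
      rw [Matrix.dotProduct_mulVec, ← Matrix.mulVec_transpose, hPsymm, Matrix.mulVec_mulVec,
        hPidem, dotProduct_comm]
      exact hν _ hmem
    exact dotProduct_self_eq_zero.mp h0
  have hperp : ∀ w : Fin p → ℝ, ∀ u ∈ S, ((1 - P).mulVec w) ⬝ᵥ u = 0 := by
    intro w u hu
    rw [Matrix.sub_mulVec, sub_dotProduct, Matrix.one_mulVec]
    have hPwu : (P.mulVec w) ⬝ᵥ u = w ⬝ᵥ u := by
      rw [dotProduct_comm, Matrix.dotProduct_mulVec, ← Matrix.mulVec_transpose, hPsymm,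
        hPu u hu, dotProduct_comm]
    rw [hPwu, sub_self]
  have hm'le := hPZmeas.comap_le
  obtain ⟨hcond0, hcondmix⟩ := condMain μ hZmeas hdot2 hdotint hPsymm rfl hm'le hPν hperp hA1 hA2
  -- the conditional expectation of the quadratic form
  have hZsub2 : ∀ i : Fin p, MemLp (fun ϖ : Ω × Ω => Z ϖ.1 i - Z ϖ.2 i) 2 (μ.prod μ) :=
    fun i => (memLp2_fst μ (hZimeas i) (hZi2 i)).sub (memLp2_snd μ (hZimeas i) (hZi2 i))
  have hFint : ∀ q : Fin p × Fin p,
      Integrable (fun ϖ : Ω × Ω => (Z ϖ.1 q.1 - Z ϖ.2 q.1) * (Z ϖ.1 q.2 - Z ϖ.2 q.2))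
        (μ.prod μ) := fun q => L2mul' (hZsub2 q.1) (hZsub2 q.2)
  have hamat : ∀ v w : Fin p → ℝ,
      (fun ϖ => v ⬝ᵥ (Amat μ p Z T C ϖ).mulVec w) =ᵐ[μ.prod μ]
      (μ.prod μ)[fun ϖ => (v ⬝ᵥ Z ϖ.1 - v ⬝ᵥ Z ϖ.2) * (w ⬝ᵥ Z ϖ.1 - w ⬝ᵥ Z ϖ.2) |
        MeasurableSpace.comap (obsTC T C) inferInstance] := by
    intro v w
    have h1 : (fun ϖ => v ⬝ᵥ (Amat μ p Z T C ϖ).mulVec w)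
        = ∑ q : Fin p × Fin p, (v q.1 * w q.2) •
            ((μ.prod μ)[fun ϖ : Ω × Ω => (Z ϖ.1 q.1 - Z ϖ.2 q.1) * (Z ϖ.1 q.2 - Z ϖ.2 q.2) |
              MeasurableSpace.comap (obsTC T C) inferInstance]) := by
      funext ϖ
      rw [Finset.sum_apply, Fintype.sum_prod_type]
      simp only [Amat, Matrix.mulVec, dotProduct, Pi.smul_apply, smul_eq_mul]
      refine Finset.sum_congr rfl (fun i _ => ?_)
      rw [Finset.mul_sum]
      refine Finset.sum_congr rfl (fun j _ => ?_)
      try dsimp only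
      ring
    have hterm : ∀ q : Fin p × Fin p,
        (μ.prod μ)[fun ϖ : Ω × Ω =>
            (v q.1 * w q.2) • ((Z ϖ.1 q.1 - Z ϖ.2 q.1) * (Z ϖ.1 q.2 - Z ϖ.2 q.2))|
            MeasurableSpace.comap (obsTC T C) inferInstance]
          =ᵐ[μ.prod μ] (v q.1 * w q.2) •
            ((μ.prod μ)[fun ϖ : Ω × Ω => (Z ϖ.1 q.1 - Z ϖ.2 q.1) * (Z ϖ.1 q.2 - Z ϖ.2 q.2)|
              MeasurableSpace.comap (obsTC T C) inferInstance]) :=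
      fun q => condExp_smul (v q.1 * w q.2)
        (fun ϖ : Ω × Ω => (Z ϖ.1 q.1 - Z ϖ.2 q.1) * (Z ϖ.1 q.2 - Z ϖ.2 q.2)) _
    have hsum := condExp_finset_sum (μ := μ.prod μ)
        (m := MeasurableSpace.comap (obsTC T C) inferInstance)
        (s := (Finset.univ : Finset (Fin p × Fin p)))
        (f := fun q (ϖ : Ω × Ω) =>
          (v q.1 * w q.2) • ((Z ϖ.1 q.1 - Z ϖ.2 q.1) * (Z ϖ.1 q.2 - Z ϖ.2 q.2)))
        (fun q _ => (hFint q).smul (v q.1 * w q.2))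
    have hGeq : (∑ q : Fin p × Fin p, fun ϖ : Ω × Ω =>
          (v q.1 * w q.2) • ((Z ϖ.1 q.1 - Z ϖ.2 q.1) * (Z ϖ.1 q.2 - Z ϖ.2 q.2)))
        = fun ϖ : Ω × Ω => (v ⬝ᵥ Z ϖ.1 - v ⬝ᵥ Z ϖ.2) * (w ⬝ᵥ Z ϖ.1 - w ⬝ᵥ Z ϖ.2) := by
      funext ϖ
      rw [Finset.sum_apply, Fintype.sum_prod_type]
      simp only [smul_eq_mul, dotProduct]
      rw [← Finset.sum_sub_distrib, ← Finset.sum_sub_distrib, Finset.sum_mul_sum]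
      refine Finset.sum_congr rfl (fun i _ => Finset.sum_congr rfl (fun j _ => by
        try dsimp only
        ring))
    rw [h1]
    have hmid : (∑ q : Fin p × Fin p,
          (μ.prod μ)[fun ϖ : Ω × Ω =>
            (v q.1 * w q.2) • ((Z ϖ.1 q.1 - Z ϖ.2 q.1) * (Z ϖ.1 q.2 - Z ϖ.2 q.2))|
            MeasurableSpace.comap (obsTC T C) inferInstance])
        =ᵐ[μ.prod μ]
          (μ.prod μ)[fun ϖ : Ω × Ω => (v ⬝ᵥ Z ϖ.1 - v ⬝ᵥ Z ϖ.2) * (w ⬝ᵥ Z ϖ.1 - w ⬝ᵥ Z ϖ.2)|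
            MeasurableSpace.comap (obsTC T C) inferInstance] := by
      rw [← hGeq]
      exact hsum.symm
    refine Filter.EventuallyEq.trans ?_ hmid
    have hallq : ∀ᵐ ϖ ∂(μ.prod μ), ∀ q : Fin p × Fin p,
        ((μ.prod μ)[fun ϖ' : Ω × Ω =>
            (v q.1 * w q.2) • ((Z ϖ'.1 q.1 - Z ϖ'.2 q.1) * (Z ϖ'.1 q.2 - Z ϖ'.2 q.2))|
          MeasurableSpace.comap (obsTC T C) inferInstance]) ϖ
        = ((v q.1 * w q.2) •
            ((μ.prod μ)[fun ϖ' : Ω × Ω => (Z ϖ'.1 q.1 - Z ϖ'.2 q.1) * (Z ϖ'.1 q.2 - Z ϖ'.2 q.2)|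
          MeasurableSpace.comap (obsTC T C) inferInstance])) ϖ := ae_all_iff.mpr hterm
    filter_upwards [hallq] with ϖ hϖ
    rw [Finset.sum_apply, Finset.sum_apply]
    exact Finset.sum_congr rfl (fun q _ => (hϖ q).symm)
  -- the key identity
  have hkey : ∀ ν : Fin p → ℝ, (∀ u ∈ S, ν ⬝ᵥ u = 0) → ∀ w : Fin p → ℝ,
      (fun ϖ => ν ⬝ᵥ (Amat μ p Z T C ϖ).mulVec w) =ᵐ[μ.prod μ]
        fun _ => 2 * (ν ⬝ᵥ ((1 - P).mulVec w)) := by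
    intro ν hν w
    have hk := keyLemma (φU := fun z => ν ⬝ᵥ z) (φV := fun z => w ⬝ᵥ z) μ hZmeas hT hC hm'le
      hcentral (measurable_dot' ν) (measurable_dot' w) (hdot2 ν) (hdot2 w)
      (hcond0 ν hν) (hcondmix ν hν w)
    exact (hamat ν w).trans hk.symm
  constructor
  · -- first statement
    intro ν hν
    have h := hkey ν hν ν
    have hd : ν ⬝ᵥ ((1 - P).mulVec ν) = ν ⬝ᵥ ν := by
      rw [Matrix.sub_mulVec, Matrix.one_mulVec, hPν ν hν, sub_zero]
    rw [hd] at h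
    exact h
  · -- second statement
    have hsym1P : (1 - P)ᵀ = 1 - P := by
      rw [Matrix.transpose_sub, Matrix.transpose_one, hPsymm]
    have hrow : ∀ (v : Fin p → ℝ) (k : Fin p),
        ((1 - P).mulVec (Pi.single k 1)) ⬝ᵥ v = ((1 - P).mulVec v) k := by
      intro v k
      rw [dotProduct_comm, Matrix.dotProduct_mulVec, ← Matrix.mulVec_transpose, hsym1P,
        dotProduct_single, mul_one]
    have hkj : ∀ k j : Fin p,
        (fun ϖ => ((1 - P).mulVec (Pi.single k 1)) ⬝ᵥ
            (Amat μ p Z T C ϖ).mulVec (Pi.single j 1)) =ᵐ[μ.prod μ]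
          fun _ => 2 * (((1 - P).mulVec (Pi.single k 1)) ⬝ᵥ Pi.single j 1) := by
      intro k j
      have h := hkey ((1 - P).mulVec (Pi.single k 1)) (hperp (Pi.single k 1)) (Pi.single j 1)
      have hval : ((1 - P).mulVec (Pi.single k 1)) ⬝ᵥ ((1 - P).mulVec (Pi.single j 1))
          = ((1 - P).mulVec (Pi.single k 1)) ⬝ᵥ Pi.single j 1 := by
        have expand : (1 - P).mulVec (Pi.single j 1)
            = Pi.single j 1 - P.mulVec (Pi.single j 1) := by
          rw [Matrix.sub_mulVec, Matrix.one_mulVec]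
        have h0 : ((1 - P).mulVec (Pi.single k 1)) ⬝ᵥ P.mulVec (Pi.single j 1) = 0 :=
          hperp (Pi.single k 1) _ ((hPrange _).mpr ⟨_, rfl⟩)
        rw [expand, dotProduct_sub, h0, sub_zero]
      rw [hval] at h
      exact h
    have hall : ∀ᵐ ϖ ∂(μ.prod μ), ∀ k j : Fin p,
        ((1 - P).mulVec (Pi.single k 1)) ⬝ᵥ (Amat μ p Z T C ϖ).mulVec (Pi.single j 1)
          = 2 * (((1 - P).mulVec (Pi.single k 1)) ⬝ᵥ Pi.single j 1) := by
      rw [ae_all_iff]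
      intro k
      rw [ae_all_iff]
      intro j
      exact hkj k j
    filter_upwards [hall] with ϖ hϖ
    rw [Submodule.span_le]
    rintro x ⟨j, rfl⟩
    have hzero : ∀ k : Fin p, ((1 - P).mulVec (Pi.single k 1)) ⬝ᵥ
        (((2:ℝ) • 1 - Amat μ p Z T C ϖ).mulVec (Pi.single j 1)) = 0 := by
      intro k
      have expand2 : (((2:ℝ) • 1 - Amat μ p Z T C ϖ)).mulVec (Pi.single j 1)
          = (2:ℝ) • (Pi.single j 1 : Fin p → ℝ)
            - (Amat μ p Z T C ϖ).mulVec (Pi.single j 1) := by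
        rw [Matrix.sub_mulVec, Matrix.smul_mulVec, Matrix.one_mulVec]
      rw [expand2, dotProduct_sub, dotProduct_smul, hϖ k j]
      simp only [smul_eq_mul]
      ring
    have hPcol : P.mulVec ((((2:ℝ) • 1 - Amat μ p Z T C ϖ)).mulVec (Pi.single j 1))
        = (((2:ℝ) • 1 - Amat μ p Z T C ϖ)).mulVec (Pi.single j 1) := by
      have hdiff : (1 - P).mulVec ((((2:ℝ) • 1 - Amat μ p Z T C ϖ)).mulVec (Pi.single j 1))
          = 0 := by
        funext k
        rw [← hrow _ k, hzero k]
        simp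
      rw [Matrix.sub_mulVec, Matrix.one_mulVec] at hdiff
      exact (sub_eq_zero.mp hdiff).symm
    have hcol : ((2:ℝ) • 1 - Amat μ p Z T C ϖ)ᵀ j
        = (((2:ℝ) • 1 - Amat μ p Z T C ϖ)).mulVec (Pi.single j 1) := by
      rw [Matrix.mulVec_single]
      funext i
      simp [Matrix.transpose_apply]
    rw [hcol]
    exact (hPrange _).mpr ⟨_, hPcol⟩
end
end

section
/- Let W_1,…,W_n be i.i.d. {0,1}-valued random variables with mean q ≥ p_min > 0, let τ > 0, let p ≥ 1, and suppose log p / n ≤ p_min²/(4+2τ)². Writing q̂ = n^{-1}∑_{i=1}^n W_i, we have P( |q̂^{-1} − q^{-1}| ≥ (4+2τ) p_min^{-2} (log p / n)^{1/2} ) ≤ 4 p^{−τ−2}. -/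
open MeasureTheory ProbabilityTheory

open Real Finset

open MeasureTheory ProbabilityTheory Real

lemma bern_aux {q t : ℝ} (hq0 : 0 ≤ q) (hq2 : q ≤ 1/2) (ht : |t| ≤ 1) :
    Real.exp (-(t*q)) * (1 + (Real.exp t - 1)*q) ≤ Real.exp (t^2/2) := by
  have h1 : 1 + (Real.exp t - 1)*q ≤ Real.exp ((Real.exp t - 1)*q) := by
    have := Real.add_one_le_exp ((Real.exp t - 1)*q); linarith
  have h2 : Real.exp (-(t*q)) * (1 + (Real.exp t - 1)*q)
      ≤ Real.exp (-(t*q) + (Real.exp t - 1)*q) := by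
    rw [Real.exp_add]
    have := Real.exp_pos (-(t*q))
    nlinarith [Real.add_one_le_exp ((Real.exp t - 1)*q)]
  refine h2.trans (Real.exp_le_exp.mpr ?_)
  have h3 : Real.exp t - 1 - t ≤ t^2 := by
    have := Real.abs_exp_sub_one_sub_id_le ht
    have := abs_le.mp this
    linarith [this.2]
  have h4 : 0 ≤ Real.exp t - 1 - t := by linarith [Real.add_one_le_exp t]
  nlinarith [sq_nonneg t]

lemma bern_mgf {q t : ℝ} (hq0 : 0 ≤ q) (hq1 : q ≤ 1) (ht : |t| ≤ 1) :
    Real.exp (-(t*q)) * (1 + (Real.exp t - 1)*q) ≤ Real.exp (t^2/2) := by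
  rcases le_or_gt q (1/2) with h | h
  · exact bern_aux hq0 h ht
  · have hq' : 0 ≤ 1 - q := by linarith
    have hq'2 : 1 - q ≤ 1/2 := by linarith
    have ht' : |(-t)| ≤ 1 := by rwa [abs_neg]
    have key := bern_aux hq' hq'2 ht'
    have hid : Real.exp (-((-t)*(1-q))) * (1 + (Real.exp (-t) - 1)*(1-q))
        = Real.exp (-(t*q)) * (1 + (Real.exp t - 1)*q) := by
      have e1 : Real.exp (-((-t)*(1-q))) = Real.exp (-(t*q)) * Real.exp t := by
        rw [← Real.exp_add]; ring_nf
      have e2 : Real.exp (-t) = (Real.exp t)⁻¹ := Real.exp_neg t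
      rw [e1, e2]
      have hE := (Real.exp_pos t).ne'
      field_simp
      ring
    rw [hid] at key
    calc Real.exp (-(t*q)) * (1 + (Real.exp t - 1)*q) ≤ Real.exp ((-t)^2/2) := key
      _ = Real.exp (t^2/2) := by ring_nf


open MeasureTheory ProbabilityTheory Real Finset

section aux
variable {Ω : Type*} [MeasurableSpace Ω] (μ : Measure Ω) [IsProbabilityMeasure μ]
  {n : ℕ} {W : Fin n → Ω → ℝ} {q : ℝ}

lemma W_int (hWmeas : ∀ i, Measurable (W i)) (hW01 : ∀ i ω, W i ω = 0 ∨ W i ω = 1) (i : Fin n) :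
    Integrable (W i) μ := by
  refine (integrable_const (1:ℝ)).mono' (hWmeas i).aestronglyMeasurable ?_
  filter_upwards with ω
  rcases hW01 i ω with h | h <;> simp [h]

lemma exp_int (hWmeas : ∀ i, Measurable (W i)) (hW01 : ∀ i ω, W i ω = 0 ∨ W i ω = 1)
    (hq0 : 0 ≤ q) (hq1 : q ≤ 1) (i : Fin n) (u : ℝ) :
    Integrable (fun ω => Real.exp (u * (W i ω - q))) μ := by
  refine (integrable_const (Real.exp |u|)).mono'
    (((hWmeas i).sub_const q).const_mul u).exp.aestronglyMeasurable ?_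
  filter_upwards with ω
  rw [Real.norm_eq_abs, Real.abs_exp]
  refine Real.exp_le_exp.mpr ?_
  have h1 : |W i ω - q| ≤ 1 := by
    rcases hW01 i ω with h | h <;> rw [h, abs_le] <;> constructor <;> linarith
  calc u * (W i ω - q) ≤ |u * (W i ω - q)| := le_abs_self _
    _ = |u| * |W i ω - q| := abs_mul _ _
    _ ≤ |u| * 1 := by gcongr
    _ = |u| := mul_one _

lemma mgf_single (hWmeas : ∀ i, Measurable (W i)) (hW01 : ∀ i ω, W i ω = 0 ∨ W i ω = 1)
    (hq : ∀ i, ∫ ω, W i ω ∂μ = q) (hq0 : 0 ≤ q) (hq1 : q ≤ 1) (i : Fin n)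
    {u : ℝ} (hu : |u| ≤ 1) :
    mgf (fun ω => W i ω - q) μ u ≤ Real.exp (u^2/2) := by
  have hpt : ∀ ω, Real.exp (u * (W i ω - q))
      = Real.exp (-(u*q)) * (1 + (Real.exp u - 1) * W i ω) := by
    intro ω
    rcases hW01 i ω with h | h <;> rw [h]
    · rw [mul_zero, add_zero, mul_one]; congr 1; ring
    · rw [mul_one, show (1 + (Real.exp u - 1)) = Real.exp u by ring,
        ← Real.exp_add]
      congr 1; ring
  have : mgf (fun ω => W i ω - q) μ u = Real.exp (-(u*q)) * (1 + (Real.exp u - 1) * q) := by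
    rw [mgf]
    simp_rw [hpt]
    rw [integral_const_mul, integral_add (integrable_const 1)
      ((W_int μ hWmeas hW01 i).const_mul _), integral_const_mul, hq i]
    simp
  rw [this]
  exact bern_mgf hq0 hq1 hu

lemma mgf_sum_le (hWmeas : ∀ i, Measurable (W i)) (hW01 : ∀ i ω, W i ω = 0 ∨ W i ω = 1)
    (hindep : iIndepFun W μ)
    (hq : ∀ i, ∫ ω, W i ω ∂μ = q) (hq0 : 0 ≤ q) (hq1 : q ≤ 1)
    {u : ℝ} (hu : |u| ≤ 1) :
    mgf (∑ i, fun ω => W i ω - q) μ u ≤ Real.exp (n * (u^2/2)) := by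
  have hXmeas : ∀ i, Measurable (fun ω => W i ω - q) := fun i => (hWmeas i).sub_const q
  have hXindep : iIndepFun (fun i => fun ω => W i ω - q) μ :=
    hindep.comp (fun _ x => x - q) (fun _ => measurable_id.sub_const q)
  rw [hXindep.mgf_sum hXmeas]
  calc ∏ i : Fin n, mgf (fun ω => W i ω - q) μ u
      ≤ ∏ _i : Fin n, Real.exp (u^2/2) := by
        refine Finset.prod_le_prod (fun i _ => mgf_nonneg) (fun i _ => ?_)
        exact mgf_single μ hWmeas hW01 hq hq0 hq1 i hu
    _ = Real.exp (n * (u^2/2)) := by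
        rw [Finset.prod_const, card_univ, Fintype.card_fin, ← Real.exp_nat_mul]

end aux

lemma scalar_incl {pmin q m τ δ : ℝ} (hpmin : 0 < pmin) (hqpmin : pmin ≤ q)
    (hδ0 : 0 < δ) (hτ : 0 < τ) (hδle : δ ≤ pmin/(4+2*τ))
    (hω : (4 + 2*τ) * pmin⁻¹ ^ 2 * δ ≤ |m⁻¹ - q⁻¹|) : (τ+2)*δ ≤ |m - q| := by
  have hτ4 : (0:ℝ) < 4 + 2*τ := by linarith
  have htle : (τ+2)*δ ≤ pmin/2 := by
    have h3 : (τ+2) * δ ≤ (τ+2) * (pmin/(4+2*τ)) := by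
      apply mul_le_mul_of_nonneg_left hδle; linarith
    have h4 : (τ+2) * (pmin/(4+2*τ)) = pmin/2 := by field_simp; ring
    linarith
  by_contra hcon
  push_neg at hcon
  have habs := abs_lt.mp hcon
  have hm1 : pmin/2 < m := by linarith
  have hm0 : 0 < m := by linarith
  have hq0' : 0 < q := lt_of_lt_of_le hpmin hqpmin
  have hne : m⁻¹ - q⁻¹ = (q - m)/(m*q) := by field_simp
  rw [hne, abs_div, abs_of_pos (mul_pos hm0 hq0')] at hω
  have h4 : (4 + 2*τ) * pmin⁻¹ ^ 2 * δ * (m*q) ≤ |q - m| :=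
    (le_div_iff₀ (mul_pos hm0 hq0')).mp hω
  have h5 : |q - m| < (τ+2)*δ := by rw [abs_sub_comm]; exact abs_lt.mpr habs
  have h6 : (4 + 2*τ) * pmin⁻¹ ^ 2 * (pmin^2/2) = τ+2 := by field_simp; ring
  have h7 : pmin^2/2 < m * q := by nlinarith
  have h8 : (τ+2)*δ < (4 + 2*τ) * pmin⁻¹ ^ 2 * δ * (m*q) := by
    rw [← h6]
    have h9 : 0 < (4 + 2*τ) * pmin⁻¹^2 := by positivity
    calc (4 + 2*τ) * pmin⁻¹ ^ 2 * (pmin^2/2) * δ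
        < (4 + 2*τ) * pmin⁻¹ ^ 2 * (m*q) * δ := by gcongr
      _ = (4 + 2*τ) * pmin⁻¹ ^ 2 * δ * (m*q) := by ring
  linarith

/-- For i.i.d. `{0,1}`-valued random variables with mean `q ≥ p_min > 0`,
if `log p / n ≤ p_min²/(4+2τ)²` then
`P(|q̂⁻¹ − q⁻¹| ≥ (4+2τ) p_min⁻² √(log p / n)) ≤ 4 p^{−τ−2}`, where `q̂` is the sample mean. -/
theorem stmt15 {Ω : Type*} [MeasurableSpace Ω] (μ : Measure Ω) [IsProbabilityMeasure μ]
    (n : ℕ) (hn : 0 < n) (W : Fin n → Ω → ℝ) (hWmeas : ∀ i, Measurable (W i))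
    (hW01 : ∀ i ω, W i ω = 0 ∨ W i ω = 1)
    (hindep : iIndepFun W μ)
    (hident : ∀ i j, μ.map (W i) = μ.map (W j))
    (q pmin : ℝ) (hpmin : 0 < pmin) (hqpmin : pmin ≤ q) (hq : ∀ i, ∫ ω, W i ω ∂μ = q)
    (τ : ℝ) (hτ : 0 < τ) (p : ℝ) (hp : 1 ≤ p)
    (hlogp : Real.log p / n ≤ pmin ^ 2 / (4 + 2 * τ) ^ 2) :
    (μ {ω | (4 + 2 * τ) * pmin⁻¹ ^ 2 * Real.sqrt (Real.log p / n)
        ≤ |((n : ℝ)⁻¹ * ∑ i, W i ω)⁻¹ - q⁻¹|}).toReal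
      ≤ 4 * p ^ (-τ - 2) := by
  have hp0 : (0:ℝ) < p := by linarith
  have hq0 : 0 ≤ q := by
    rw [← hq ⟨0, hn⟩]
    refine integral_nonneg fun ω => ?_
    rcases hW01 ⟨0, hn⟩ ω with h | h <;> simp [h]
  have hq1 : q ≤ 1 := by
    rw [← hq ⟨0, hn⟩]
    calc ∫ ω, W ⟨0, hn⟩ ω ∂μ ≤ ∫ _ω, (1:ℝ) ∂μ := by
          refine integral_mono (W_int μ hWmeas hW01 _) (integrable_const 1) fun ω => ?_
          rcases hW01 ⟨0, hn⟩ ω with h | h <;> simp [h]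
      _ = 1 := by simp
  have hlog0 : 0 ≤ Real.log p := Real.log_nonneg hp
  have hrpow0 : (0:ℝ) ≤ p ^ (-τ - 2) := Real.rpow_nonneg hp0.le _
  rcases eq_or_lt_of_le hlog0 with hlog | hlog
  · -- degenerate case log p = 0
    have h1 : p ^ (-τ-2) = 1 := by
      rw [Real.rpow_def_of_pos hp0, ← hlog, zero_mul, Real.exp_zero]
    calc (μ _).toReal ≤ (μ Set.univ).toReal :=
          ENNReal.toReal_mono (measure_ne_top _ _) (measure_mono (Set.subset_univ _))
      _ = 1 := by simp
      _ ≤ 4 * p ^ (-τ-2) := by rw [h1]; norm_num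
  · -- main case
    have hn0 : (0:ℝ) < n := by exact_mod_cast hn
    have hτ4 : (0:ℝ) < 4 + 2*τ := by linarith
    set δ := Real.sqrt (Real.log p / n) with hδdef
    have hδpos : 0 < δ := Real.sqrt_pos.mpr (by positivity)
    have hδsq : (n:ℝ) * δ^2 = Real.log p := by
      rw [hδdef, Real.sq_sqrt (by positivity)]
      field_simp
    have hδle : δ ≤ pmin / (4 + 2*τ) := by
      rw [hδdef]
      have h2 : Real.log p / n ≤ (pmin/(4+2*τ))^2 := by rw [div_pow]; exact hlogp
      calc Real.sqrt (Real.log p / n) ≤ Real.sqrt ((pmin/(4+2*τ))^2) := Real.sqrt_le_sqrt h2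
        _ = pmin/(4+2*τ) := Real.sqrt_sq (by positivity)
    set s : ℝ := τ + 2 with hsdef
    set t : ℝ := s * δ with htdef
    have hspos : 0 < s := by rw [hsdef]; linarith
    have ht0 : 0 < t := mul_pos hspos hδpos
    have htle : t ≤ pmin / 2 := by
      have h3 : s * δ ≤ s * (pmin/(4+2*τ)) := by gcongr
      have h4 : s * (pmin/(4+2*τ)) = pmin/2 := by
        rw [hsdef]; field_simp; ring
      rw [htdef]; linarith
    have hpm1 : pmin ≤ 1 := le_trans hqpmin hq1
    have ht1 : |t| ≤ 1 := by rw [abs_of_pos ht0]; linarith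
    have ht1' : |(-t)| ≤ 1 := by rwa [abs_neg]
    -- the centered sum
    set X : Fin n → Ω → ℝ := fun i ω => W i ω - q with hXdef
    have hXmeas : ∀ i, Measurable (X i) := fun i => (hWmeas i).sub_const q
    have hSapp : ∀ ω, (∑ i, X i) ω = (∑ i, W i ω) - n * q := by
      intro ω
      rw [Finset.sum_apply]
      rw [hXdef]
      rw [Finset.sum_sub_distrib, Finset.sum_const, Finset.card_univ, Fintype.card_fin,
        nsmul_eq_mul]
    have hSmeas : Measurable (∑ i, X i) := by
      have : (∑ i, X i) = fun ω => (∑ i, W i ω) - n * q := funext hSapp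
      rw [this]
      exact (Finset.measurable_sum _ fun i _ => hWmeas i).sub_const _
    have hSbd : ∀ ω, |(∑ i, X i) ω| ≤ n := by
      intro ω
      rw [Finset.sum_apply]
      calc |∑ i, X i ω| ≤ ∑ i, |X i ω| := Finset.abs_sum_le_sum_abs _ _
        _ ≤ ∑ _i : Fin n, (1:ℝ) := by
            refine Finset.sum_le_sum fun i _ => ?_
            rw [hXdef]
            rcases hW01 i ω with h | h <;> rw [abs_le] <;> constructor <;>
              simp [h] <;> linarith
        _ = n := by simp
    have hSint : ∀ u : ℝ, Integrable (fun ω => Real.exp (u * (∑ i, X i) ω)) μ := by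
      intro u
      refine (integrable_const (Real.exp (|u| * n))).mono'
        (((hSmeas.const_mul u).exp).aestronglyMeasurable) ?_
      filter_upwards with ω
      rw [Real.norm_eq_abs, Real.abs_exp]
      refine Real.exp_le_exp.mpr ?_
      calc u * (∑ i, X i) ω ≤ |u * (∑ i, X i) ω| := le_abs_self _
        _ = |u| * |(∑ i, X i) ω| := abs_mul _ _
        _ ≤ |u| * n := mul_le_mul_of_nonneg_left (hSbd ω) (abs_nonneg u)
    -- mgf bounds
    have hmgf : ∀ u : ℝ, |u| ≤ 1 → mgf (∑ i, X i) μ u ≤ Real.exp (n * (u^2/2)) :=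
      fun u hu => mgf_sum_le μ hWmeas hW01 hindep hq hq0 hq1 hu
    -- tail bounds
    have hexp : (-t) * ((n:ℝ)*t) + (n:ℝ) * (t^2/2) = -((s^2 * Real.log p)/2) := by
      rw [htdef]
      linear_combination (-(s^2)/2) * hδsq
    have hpow : Real.exp (-((s^2 * Real.log p)/2)) ≤ p ^ (-τ - 2) := by
      rw [Real.rpow_def_of_pos hp0]
      refine Real.exp_le_exp.mpr ?_
      rw [hsdef]
      nlinarith [mul_nonneg (mul_nonneg hτ.le hlog.le) (show (0:ℝ) ≤ τ + 2 by linarith)]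
    have hup : (μ {ω | (n:ℝ)*t ≤ (∑ i, X i) ω}).toReal ≤ p ^ (-τ - 2) := by
      calc (μ {ω | (n:ℝ)*t ≤ (∑ i, X i) ω}).toReal
          ≤ Real.exp (-t * ((n:ℝ)*t)) * mgf (∑ i, X i) μ t :=
            measure_ge_le_exp_mul_mgf _ ht0.le (hSint t)
        _ ≤ Real.exp (-t * ((n:ℝ)*t)) * Real.exp ((n:ℝ) * (t^2/2)) := by
            gcongr
            exact hmgf t ht1
        _ = Real.exp ((-t) * ((n:ℝ)*t) + (n:ℝ) * (t^2/2)) := by rw [← Real.exp_add]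
        _ ≤ p ^ (-τ - 2) := by rw [hexp]; exact hpow
    have hlo : (μ {ω | (∑ i, X i) ω ≤ -((n:ℝ)*t)}).toReal ≤ p ^ (-τ - 2) := by
      calc (μ {ω | (∑ i, X i) ω ≤ -((n:ℝ)*t)}).toReal
          ≤ Real.exp (-(-t) * (-((n:ℝ)*t))) * mgf (∑ i, X i) μ (-t) :=
            measure_le_le_exp_mul_mgf _ (by linarith) (hSint (-t))
        _ ≤ Real.exp (-(-t) * (-((n:ℝ)*t))) * Real.exp ((n:ℝ) * ((-t)^2/2)) := by
            gcongr
            exact hmgf (-t) ht1'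
        _ = Real.exp ((-t) * ((n:ℝ)*t) + (n:ℝ) * (t^2/2)) := by
            rw [← Real.exp_add]; ring_nf
        _ ≤ p ^ (-τ - 2) := by rw [hexp]; exact hpow
    -- event inclusion
    have hAB : {ω | (4 + 2 * τ) * pmin⁻¹ ^ 2 * δ ≤ |((n : ℝ)⁻¹ * ∑ i, W i ω)⁻¹ - q⁻¹|}
        ⊆ {ω | (n:ℝ)*t ≤ (∑ i, X i) ω} ∪ {ω | (∑ i, X i) ω ≤ -((n:ℝ)*t)} := by
      intro ω hω
      simp only [Set.mem_setOf_eq] at hω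
      set m : ℝ := (n:ℝ)⁻¹ * ∑ i, W i ω with hm
      have hsum : (∑ i, W i ω) = (n:ℝ) * m := by rw [hm]; field_simp
      have hε : 0 < (4 + 2 * τ) * pmin⁻¹ ^ 2 * δ := by positivity
      have hkey : t ≤ |m - q| := by
        rw [htdef, hsdef]
        exact scalar_incl hpmin hqpmin hδpos hτ hδle hω
      rcases le_abs.mp hkey with h | h
      · left
        show (n:ℝ)*t ≤ (∑ i, X i) ω
        rw [hSapp, hsum]
        have h10 : (n:ℝ)*t ≤ (n:ℝ)*(m - q) := mul_le_mul_of_nonneg_left h hn0.le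
        linarith [h10, (show (n:ℝ)*(m-q) = (n:ℝ)*m - (n:ℝ)*q by ring)]
      · right
        show (∑ i, X i) ω ≤ -((n:ℝ)*t)
        rw [hSapp, hsum]
        have h10 : (n:ℝ)*t ≤ (n:ℝ)*(-(m - q)) := mul_le_mul_of_nonneg_left h hn0.le
        linarith [h10, (show (n:ℝ)*(-(m-q)) = (n:ℝ)*q - (n:ℝ)*m by ring)]
    calc (μ {ω | (4 + 2 * τ) * pmin⁻¹ ^ 2 * δ ≤ |((n : ℝ)⁻¹ * ∑ i, W i ω)⁻¹ - q⁻¹|}).toReal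
        ≤ (μ ({ω | (n:ℝ)*t ≤ (∑ i, X i) ω} ∪ {ω | (∑ i, X i) ω ≤ -((n:ℝ)*t)})).toReal :=
          ENNReal.toReal_mono (measure_ne_top _ _) (measure_mono hAB)
      _ ≤ (μ {ω | (n:ℝ)*t ≤ (∑ i, X i) ω}).toReal + (μ {ω | (∑ i, X i) ω ≤ -((n:ℝ)*t)}).toReal := by
          rw [← ENNReal.toReal_add (measure_ne_top _ _) (measure_ne_top _ _)]
          exact ENNReal.toReal_mono (ENNReal.add_ne_top.mpr ⟨measure_ne_top _ _, measure_ne_top _ _⟩) (measure_union_le _ _)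
      _ ≤ p ^ (-τ-2) + p ^ (-τ-2) := add_le_add hup hlo
      _ ≤ 4 * p ^ (-τ-2) := by linarith
end
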